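/- arXiv:1610.05447 — 2 statements merged into one kernel-verified Lean document; each statement's English description precedes it below -/
import Mathlib

section
/- Let u be the unique single-interface solution with initial datum u(0) ∈ X_1. Then: (i) for any k ≥ 1 with t_k^* < ∞ one has u_k(t_k^*) = u_*, u̇_k(t_k^*) > 0, and t_{k+1}^* - t_k^* ≥ C for a constant C > 0 depending only on Φ and the initial data; (ii) at any time t > 0 with u_k(t) = -u_* and u̇_k(t) ≥ 0 the spinodal entrance condition u_{k-1}(t) > u_{**} holds. -/
open MeasureTheory Filter Set
open scoped Classical Topology NNReal

noncomputable section

/-- Forward difference on ℤ. -/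
def fd (v : ℤ → ℝ) (j : ℤ) : ℝ := v (j + 1) - v j

/-- Discrete Laplacian on ℤ. -/
def lap (v : ℤ → ℝ) (j : ℤ) : ℝ := v (j + 1) + v (j - 1) - 2 * v j

def uStar (κ : ℝ) : ℝ := 1 / (1 + κ)

def pStar (κ : ℝ) : ℝ := κ / (1 + κ)

def uStarStar (κ : ℝ) : ℝ := (1 + 2 * κ) / (1 + κ)

/-- The trilinear constitutive function Φ'. -/
def Phi' (κ u : ℝ) : ℝ :=
  if u ≤ -uStar κ then u + 1
  else if uStar κ ≤ u then u - 1
  else -κ * u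

/-- The double-well energy Φ. -/
def Phi (κ u : ℝ) : ℝ :=
  if u ≤ -uStar κ then (u + 1) ^ 2 / 2
  else if uStar κ ≤ u then (u - 1) ^ 2 / 2
  else (pStar κ - κ * u ^ 2) / 2

/-- The single-interface state space X_k. -/
def memX (κ : ℝ) (k : ℤ) (u : ℤ → ℝ) : Prop :=
  (∃ c, uStar κ < c ∧ ∀ j, j < k → c ≤ u j) ∧
  (∃ C, ∀ j, j < k → u j ≤ C) ∧
  (∃ c, -uStarStar κ < c ∧ ∀ j, k < j → c ≤ u j) ∧
  (∃ C, C < -uStar κ ∧ ∀ j, k < j → u j ≤ C) ∧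
  -uStarStar κ < u k ∧ u k < uStar κ

/-- `u` is a bounded (ℓ^∞-valued) solution of the lattice ODE u̇_j = Δ Φ'(u_j) for t ≥ 0. -/
def LatticeSol (κ : ℝ) (u : ℝ → ℤ → ℝ) : Prop :=
  (∀ t : ℝ, 0 ≤ t → ∀ j : ℤ,
      HasDerivAt (fun s => u s j) (lap (fun i => Phi' κ (u t i)) j) t) ∧
  (∀ t : ℝ, 0 ≤ t → ∃ C : ℝ, ∀ j : ℤ, |u t j| ≤ C)

/-- A single-interface solution with phase transition times `tstar` (with `tstar 0 = 0`);
the value `⊤ : WithTop ℝ` encodes `∞`. -/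
structure IsSIS (κ : ℝ) (u : ℝ → ℤ → ℝ) (tstar : ℕ → WithTop ℝ) : Prop where
  sol : LatticeSol κ u
  t0 : tstar 0 = 0
  pos : ∀ k : ℕ, 1 ≤ k → 0 < tstar k
  mono : Monotone tstar
  step : ∀ k : ℕ, 1 ≤ k → tstar k = ⊤ ∨ tstar k < tstar (k + 1)
  phase : ∀ k : ℕ, 1 ≤ k → tstar (k - 1) ≠ ⊤ →
    ∀ t : ℝ, tstar (k - 1) < (t : WithTop ℝ) → (t : WithTop ℝ) < tstar k →
      memX κ (k : ℤ) (u t)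

/-- The real value of a finite phase transition time (junk value `0` for `⊤`). -/
def tkr (tstar : ℕ → WithTop ℝ) (k : ℕ) : ℝ := (tstar k).untopD 0

/-- First spinodal entrance time t_k^#. -/
def tsharp (κ : ℝ) (u : ℝ → ℤ → ℝ) (tstar : ℕ → WithTop ℝ) (k : ℕ) : ℝ :=
  sInf {t : ℝ | tstar (k - 1) < (t : WithTop ℝ) ∧ -uStar κ < u t (k : ℤ)}

/-- Final spinodal entrance time t_k^♭. -/
def tflat (κ : ℝ) (u : ℝ → ℤ → ℝ) (tstar : ℕ → WithTop ℝ) (k : ℕ) : ℝ :=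
  sInf {t : ℝ | tsharp κ u tstar k ≤ t ∧ ∀ s : ℝ, t < s → -uStar κ < u s (k : ℤ)}

/-- The discrete heat kernel on ℤ. -/
def IsHeatKernel (g : ℝ → ℤ → ℝ) : Prop :=
  (∀ j : ℤ, g 0 j = if j = 0 then 1 else 0) ∧
  (∀ t : ℝ, ∀ j : ℤ, HasDerivAt (fun s => g s j) (lap (g t) j) t) ∧
  (∀ t : ℝ, 0 ≤ t → Summable fun j : ℤ => |g t j|)

/-- The diffusive part q^{(k)}. -/
def qf (κ : ℝ) (u : ℝ → ℤ → ℝ) (tstar : ℕ → WithTop ℝ) (g : ℝ → ℤ → ℝ)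
    (k : ℕ) (t : ℝ) (j : ℤ) : ℝ :=
  if t < tsharp κ u tstar k then 0
  else ∑' n : ℤ, g (t - tsharp κ u tstar k) (j - n) * Phi' κ (u (tsharp κ u tstar k) n)

/-- The k-th spinodal fluctuation r^{(k)}. -/
def rf (κ : ℝ) (u : ℝ → ℤ → ℝ) (tstar : ℕ → WithTop ℝ) (g : ℝ → ℤ → ℝ)
    (k : ℕ) (t : ℝ) (j : ℤ) : ℝ :=
  if t ≤ tsharp κ u tstar k then 0
  else if (t : WithTop ℝ) ≤ tstar k then -Phi' κ (u t j) + qf κ u tstar g k t j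
  else ∑' n : ℤ, g (t - tkr tstar k) (j - n) *
        (-Phi' κ (u (tkr tstar k) n) + qf κ u tstar g k (tkr tstar k) n)

/-- The quantity D_k. -/
def Dk (κ : ℝ) (u : ℝ → ℤ → ℝ) (tstar : ℕ → WithTop ℝ) (g : ℝ → ℤ → ℝ) (k : ℕ) : ℝ :=
  ∫ s in (tsharp κ u tstar k)..(tkr tstar k),
    |deriv (fun r => qf κ u tstar g k r (k : ℤ)) s|

/-- The universal impact profile ϱ. -/
def rho (κ : ℝ) (j : ℤ) : ℝ := 2 * pStar κ / (1 + 2 * κ) ^ j.natAbs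

/-- The essential fluctuation r_ess^{(k)}. -/
def ress (κ : ℝ) (tstar : ℕ → WithTop ℝ) (g : ℝ → ℤ → ℝ) (k : ℕ) (t : ℝ) (j : ℤ) : ℝ :=
  if tstar k ≤ (t : WithTop ℝ) then
    ∑' n : ℤ, g (t - tkr tstar k) (j - n) * rho κ (n - (k : ℤ))
  else 0

/-- The negligible fluctuation r_¬^{(k)}. -/
def rneg (κ : ℝ) (u : ℝ → ℤ → ℝ) (tstar : ℕ → WithTop ℝ) (g : ℝ → ℤ → ℝ)
    (k : ℕ) (t : ℝ) (j : ℤ) : ℝ :=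
  rf κ u tstar g k t j - ress κ tstar g k t j

/-- The residual fluctuation r_res^{(k)} (with cut-off parameter d and scaling ε). -/
def rres (κ : ℝ) (tstar : ℕ → WithTop ℝ) (g : ℝ → ℤ → ℝ) (k : ℕ) (d ε : ℝ)
    (t : ℝ) (j : ℤ) : ℝ :=
  if tkr tstar k ≤ t ∧ t < tkr tstar k + d / ε then ress κ tstar g k t j else 0

/-- The regular fluctuation r_reg^{(k)} (with cut-off parameter d, scaling ε, final time tfin). -/
def rreg (κ : ℝ) (tstar : ℕ → WithTop ℝ) (g : ℝ → ℤ → ℝ) (k : ℕ) (d ε tfin : ℝ)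
    (t : ℝ) (j : ℤ) : ℝ :=
  if tkr tstar k + d / ε ≤ t ∧ t < tfin then ress κ tstar g k t j else 0

/-- Macroscopic single-interface initial data with scaling parameter ε. -/
def MacroData (κ ε α β : ℝ) (u0 : ℤ → ℝ) : Prop :=
  memX κ 1 u0 ∧
  ¬(-uStar κ < u0 1 ∧ u0 1 < uStar κ) ∧
  (∀ j : ℤ, |Phi' κ (u0 j)| ≤ α) ∧
  (∀ j : ℤ, |Phi' κ (u0 (j + 1)) - Phi' κ (u0 j)| ≤ α * ε) ∧
  (∀ j : ℤ, j ≠ 1 → |lap (fun i => Phi' κ (u0 i)) j| ≤ α * ε ^ 2) ∧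
  |lap (fun i => Phi' κ (u0 i)) 1| ≤ β * ε ∧
  (∀ j : ℤ, Phi' κ (u0 j) ≤ pStar κ + ε * β * max 0 (1 - (j : ℝ)))

/-- The number K_ε of phase transitions before the microscopic time tfin. -/
def Keps (tstar : ℕ → WithTop ℝ) (tfin : ℝ) : ℕ :=
  sSup {k : ℕ | 1 ≤ k ∧ tstar k ≤ (tfin : WithTop ℝ)}

/-- The lattice index j_ξ determined by ξ = ε (j_ξ + ζ) with ζ ∈ (-1/2, 1/2]. -/
def jIdx (ε ξ : ℝ) : ℤ := ⌈ξ / ε - 1 / 2⌉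

/-- The piecewise constant macroscopic field P_ε. -/
def Pf (κ : ℝ) (u : ℝ → ℤ → ℝ) (ε τ ξ : ℝ) : ℝ := Phi' κ (u (τ / ε ^ 2) (jIdx ε ξ))

/-- The piecewise constant macroscopic field U_ε. -/
def Uf (u : ℝ → ℤ → ℝ) (ε τ ξ : ℝ) : ℝ := u (τ / ε ^ 2) (jIdx ε ξ)

/-- The discrete interface curve Ξ_ε^*. -/
def XiStar (tstar : ℕ → WithTop ℝ) (ε τ : ℝ) : ℝ :=
  ε * ((sInf {k : ℕ | 1 ≤ k ∧ ((τ / ε ^ 2 : ℝ) : WithTop ℝ) < tstar k} : ℕ) : ℝ)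

/-- The discrete interface curve Ξ_ε^#. -/
def XiSharp (κ : ℝ) (u : ℝ → ℤ → ℝ) (tstar : ℕ → WithTop ℝ) (ε τ : ℝ) : ℝ :=
  ε * ((sInf {k : ℕ | 1 ≤ k ∧ τ / ε ^ 2 < tsharp κ u tstar k} : ℕ) : ℝ)

/-- The approximate macroscopic phase field M_ε. -/
def Mf (κ : ℝ) (u : ℝ → ℤ → ℝ) (tstar : ℕ → WithTop ℝ) (ε τ ξ : ℝ) : ℝ :=
  if XiSharp κ u tstar ε τ < ξ then -1
  else if ξ < XiStar tstar ε τ then 1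
  else 0

/-- The scaled forward difference ∇_{+ε} P_ε. -/
def gradP (κ : ℝ) (u : ℝ → ℤ → ℝ) (ε τ ξ : ℝ) : ℝ :=
  (Phi' κ (u (τ / ε ^ 2) (jIdx ε ξ + 1)) - Phi' κ (u (τ / ε ^ 2) (jIdx ε ξ))) / ε

namespace SIS

variable {κ : ℝ}

lemma h1κ (hκ : 0 < κ) : (0:ℝ) < 1 + κ := by linarith

lemma uStar_pos (hκ : 0 < κ) : 0 < uStar κ := by
  unfold uStar; positivity

lemma pStar_pos (hκ : 0 < κ) : 0 < pStar κ := by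
  unfold pStar; positivity

lemma uStar_add_pStar (hκ : 0 < κ) : uStar κ + pStar κ = 1 := by
  unfold uStar pStar; field_simp

lemma uStarStar_eq (hκ : 0 < κ) : uStarStar κ = 1 + pStar κ := by
  unfold uStarStar pStar; field_simp; ring

lemma uStar_lt_one (hκ : 0 < κ) : uStar κ < 1 := by
  have := uStar_add_pStar hκ; have := pStar_pos hκ; linarith

lemma pStar_lt_one (hκ : 0 < κ) : pStar κ < 1 := by
  have := uStar_add_pStar hκ; have := uStar_pos hκ; linarith

lemma uStar_lt_uStarStar (hκ : 0 < κ) : uStar κ < uStarStar κ := by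
  have := uStarStar_eq hκ; have := uStar_lt_one hκ; have := pStar_pos hκ; linarith

lemma uStarStar_lt_two (hκ : 0 < κ) : uStarStar κ < 2 := by
  have := uStarStar_eq hκ; have := pStar_lt_one hκ; linarith

lemma neg_uStar_lt_uStar (hκ : 0 < κ) : -uStar κ < uStar κ := by
  have := uStar_pos hκ; linarith

lemma neg_uStarStar_lt_neg_uStar (hκ : 0 < κ) : -uStarStar κ < -uStar κ := by
  have := uStar_lt_uStarStar hκ; linarith

lemma kappa_mul_uStar (hκ : 0 < κ) : κ * uStar κ = pStar κ := by
  unfold uStar pStar; field_simp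

/-- branch formulas -/
lemma Phi'_of_le (x : ℝ) (hx : x ≤ -uStar κ) : Phi' κ x = x + 1 := by
  unfold Phi'; rw [if_pos hx]

lemma Phi'_of_ge (hκ : 0 < κ) {x : ℝ} (hx : uStar κ ≤ x) : Phi' κ x = x - 1 := by
  unfold Phi'
  rw [if_neg, if_pos hx]
  have h1 := uStar_pos hκ
  intro h; linarith

lemma Phi'_of_mid (hκ : 0 < κ) {x : ℝ} (hx1 : -uStar κ < x) (hx2 : x < uStar κ) :
    Phi' κ x = -κ * x := by
  unfold Phi'
  rw [if_neg (by linarith), if_neg (by linarith)]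

lemma Phi'_uStar (hκ : 0 < κ) : Phi' κ (uStar κ) = -pStar κ := by
  rw [Phi'_of_ge hκ le_rfl]; have := uStar_add_pStar hκ; linarith

lemma Phi'_neg_uStar (hκ : 0 < κ) : Phi' κ (-uStar κ) = pStar κ := by
  rw [Phi'_of_le _ le_rfl]; have := uStar_add_pStar hκ; linarith

lemma Phi'_neg_uStarStar (hκ : 0 < κ) : Phi' κ (-uStarStar κ) = -pStar κ := by
  rw [Phi'_of_le]
  · have := uStarStar_eq hκ; linarith
  · have := neg_uStarStar_lt_neg_uStar hκ; linarith

/-- Phi' as max-min: used for continuity. -/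
lemma Phi'_eq_max_min (hκ : 0 < κ) (x : ℝ) :
    Phi' κ x = max (min (x + 1) (-κ * x)) (x - 1) := by
  have hu := uStar_pos hκ
  have h1 : uStar κ * (1 + κ) = 1 := by unfold uStar; field_simp
  rcases le_or_gt x (-uStar κ) with hx | hx
  · rw [Phi'_of_le _ hx]
    have h2 : x + 1 ≤ -κ * x := by nlinarith
    rw [min_eq_left h2, max_eq_left (by linarith)]
  · rcases lt_or_ge x (uStar κ) with hx2 | hx2
    · rw [Phi'_of_mid hκ hx hx2]
      have h2 : -κ * x ≤ x + 1 := by nlinarith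
      have h3 : x - 1 ≤ -κ * x := by nlinarith
      rw [min_eq_right h2, max_eq_left h3]
    · rw [Phi'_of_ge hκ hx2]
      have h2 : -κ * x ≤ x + 1 := by nlinarith
      have h3 : -κ * x ≤ x - 1 := by nlinarith
      rw [min_eq_right h2, max_eq_right h3]

lemma continuous_Phi' (hκ : 0 < κ) : Continuous (Phi' κ) := by
  have : (Phi' κ) = fun x => max (min (x + 1) (-κ * x)) (x - 1) := by
    funext x; exact Phi'_eq_max_min hκ x
  rw [this]
  fun_prop

lemma Phi'_le_add_one (hκ : 0 < κ) (x : ℝ) : Phi' κ x ≤ x + 1 := by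
  have hu := uStar_pos hκ
  have h1 : uStar κ * (1 + κ) = 1 := by unfold uStar; field_simp
  rw [Phi'_eq_max_min hκ]
  apply max_le (min_le_left _ _) (by linarith)

lemma sub_one_le_Phi' (hκ : 0 < κ) (x : ℝ) : x - 1 ≤ Phi' κ x := by
  rw [Phi'_eq_max_min hκ]; exact le_max_right _ _

lemma Phi'_le_pStar_of_le_uStar (hκ : 0 < κ) {x : ℝ} (hx : x ≤ uStar κ) :
    Phi' κ x ≤ pStar κ := by
  have hu := uStar_pos hκ
  have hup := uStar_add_pStar hκ
  have hk := kappa_mul_uStar hκ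
  rcases le_or_gt x (-uStar κ) with h | h
  · rw [Phi'_of_le _ h]; linarith
  · rcases lt_or_ge x (uStar κ) with h2 | h2
    · rw [Phi'_of_mid hκ h h2]; nlinarith
    · rw [Phi'_of_ge hκ h2]
      have := pStar_pos hκ; linarith

lemma Phi'_lt_pStar_of_lt (hκ : 0 < κ) {x : ℝ} (hx : x < -uStar κ) :
    Phi' κ x < pStar κ := by
  rw [Phi'_of_le _ hx.le]
  have := uStar_add_pStar hκ; linarith

lemma eq_neg_uStar_of_Phi'_pStar (hκ : 0 < κ) {x : ℝ} (hx : x ≤ uStar κ)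
    (hp : Phi' κ x = pStar κ) : x = -uStar κ := by
  have hu := uStar_pos hκ
  have hup := uStar_add_pStar hκ
  have hk := kappa_mul_uStar hκ
  rcases le_or_gt x (-uStar κ) with h | h
  · rw [Phi'_of_le _ h] at hp; linarith
  · rcases lt_or_ge x (uStar κ) with h2 | h2
    · rw [Phi'_of_mid hκ h h2] at hp; nlinarith
    · rw [Phi'_of_ge hκ h2] at hp
      have := pStar_pos hκ; linarith

lemma neg_pStar_le_Phi' (hκ : 0 < κ) {x : ℝ} (hx : -uStarStar κ ≤ x) :
    -pStar κ ≤ Phi' κ x := by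
  have hu := uStar_pos hκ
  have hup := uStar_add_pStar hκ
  have hk := kappa_mul_uStar hκ
  have hss := uStarStar_eq hκ
  rcases le_or_gt x (-uStar κ) with h | h
  · rw [Phi'_of_le _ h]; linarith
  · rcases lt_or_ge x (uStar κ) with h2 | h2
    · rw [Phi'_of_mid hκ h h2]; nlinarith
    · rw [Phi'_of_ge hκ h2]; linarith

/-- if Phi' x > pStar then x is on the upper branch. -/
lemma upper_of_Phi'_gt (hκ : 0 < κ) {x : ℝ} (hp : pStar κ < Phi' κ x) :
    Phi' κ x = x - 1 ∧ uStarStar κ < x := by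
  have h2 : ¬ x ≤ uStar κ := fun h => absurd (Phi'_le_pStar_of_le_uStar hκ h) (not_le.2 hp)
  push_neg at h2
  have h3 := Phi'_of_ge hκ h2.le
  refine ⟨h3, ?_⟩
  rw [h3] at hp
  have := uStarStar_eq hκ; linarith

lemma eq_neg_uStarStar_of_Phi' (hκ : 0 < κ) {x : ℝ} (hx : x ≤ -uStar κ)
    (hp : Phi' κ x = -pStar κ) : x = -uStarStar κ := by
  rw [Phi'_of_le _ hx] at hp
  have := uStarStar_eq hκ; linarith

lemma eq_uStar_of_Phi' (hκ : 0 < κ) {x : ℝ} (hx : uStar κ ≤ x)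
    (hp : Phi' κ x = -pStar κ) : x = uStar κ := by
  rw [Phi'_of_ge hκ hx] at hp
  have := uStar_add_pStar hκ; linarith

end SIS

namespace SIS

/-! ### one-sided limit lemmas -/

lemma left_le {f : ℝ → ℝ} {t0 a c : ℝ} (hf : ContinuousAt f t0) (ha : a < t0)
    (h : ∀ s, a < s → s < t0 → f s ≤ c) : f t0 ≤ c := by
  have htend : Filter.Tendsto f (nhdsWithin t0 (Set.Iio t0)) (nhds (f t0)) :=
    hf.tendsto.mono_left nhdsWithin_le_nhds
  refine le_of_tendsto htend ?_
  have hm : Set.Ioo a t0 ∈ nhdsWithin t0 (Set.Iio t0) :=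
    Ioo_mem_nhdsLT_of_mem ⟨ha, le_rfl⟩
  filter_upwards [hm] with s hs
  exact h s hs.1 hs.2

lemma left_ge {f : ℝ → ℝ} {t0 a c : ℝ} (hf : ContinuousAt f t0) (ha : a < t0)
    (h : ∀ s, a < s → s < t0 → c ≤ f s) : c ≤ f t0 := by
  have := left_le (f := fun s => -f s) (c := -c) (hf.neg) ha (fun s h1 h2 => by
    simp only [neg_le_neg_iff]; exact h s h1 h2)
  simpa using this

lemma right_le {f : ℝ → ℝ} {t0 b c : ℝ} (hf : ContinuousAt f t0) (hb : t0 < b)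
    (h : ∀ s, t0 < s → s < b → f s ≤ c) : f t0 ≤ c := by
  have htend : Filter.Tendsto f (nhdsWithin t0 (Set.Ioi t0)) (nhds (f t0)) :=
    hf.tendsto.mono_left nhdsWithin_le_nhds
  refine le_of_tendsto htend ?_
  have hm : Set.Ioo t0 b ∈ nhdsWithin t0 (Set.Ioi t0) :=
    Ioo_mem_nhdsGT_of_mem ⟨le_rfl, hb⟩
  filter_upwards [hm] with s hs
  exact h s hs.1 hs.2

lemma right_ge {f : ℝ → ℝ} {t0 b c : ℝ} (hf : ContinuousAt f t0) (hb : t0 < b)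
    (h : ∀ s, t0 < s → s < b → c ≤ f s) : c ≤ f t0 := by
  have := right_le (f := fun s => -f s) (c := -c) (hf.neg) hb (fun s h1 h2 => by
    simp only [neg_le_neg_iff]; exact h s h1 h2)
  simpa using this

/-- right limit equality: if f = g on (t0,b) and both continuous at t0, f t0 = g t0 -/
lemma right_eq {f g : ℝ → ℝ} {t0 b : ℝ} (hf : ContinuousAt f t0) (hg : ContinuousAt g t0)
    (hb : t0 < b) (h : ∀ s, t0 < s → s < b → f s = g s) : f t0 = g t0 := by
  have h1 : f t0 - g t0 ≤ 0 :=
    right_le (f := fun s => f s - g s) (c := 0) (hf.sub hg) hb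
      (fun s hs1 hs2 => by show f s - g s ≤ 0; rw [h s hs1 hs2]; simp)
  have h2 : (0:ℝ) ≤ f t0 - g t0 :=
    right_ge (f := fun s => f s - g s) (c := 0) (hf.sub hg) hb
      (fun s hs1 hs2 => by show (0:ℝ) ≤ f s - g s; rw [h s hs1 hs2]; simp)
  linarith

/-! ### derivative sign lemmas -/

/-- local minimum (two-sided) gives zero derivative -/
lemma deriv_zero_of_localmin {f : ℝ → ℝ} {t0 a b d : ℝ} (hd : HasDerivAt f d t0)
    (ha : a < t0) (hb : t0 < b) (h : ∀ s, a < s → s < b → f t0 ≤ f s) : d = 0 := by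
  have : IsLocalMin f t0 := by
    have hm : Set.Ioo a b ∈ nhds t0 := Ioo_mem_nhds ha hb
    filter_upwards [hm] with s hs
    exact h s hs.1 hs.2
  exact this.hasDerivAt_eq_zero hd

lemma deriv_zero_of_localmax {f : ℝ → ℝ} {t0 a b d : ℝ} (hd : HasDerivAt f d t0)
    (ha : a < t0) (hb : t0 < b) (h : ∀ s, a < s → s < b → f s ≤ f t0) : d = 0 := by
  have := deriv_zero_of_localmin (f := fun s => -f s) hd.neg ha hb
    (fun s h1 h2 => by simpa using neg_le_neg (h s h1 h2))
  linarith

/-- if f ≤ f t0 on a left neighbourhood then the derivative at t0 is nonnegative -/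
lemma deriv_nonneg_of_left_le {f : ℝ → ℝ} {t0 a d : ℝ} (hd : HasDerivAt f d t0)
    (ha : a < t0) (h : ∀ s, a < s → s < t0 → f s ≤ f t0) : 0 ≤ d := by
  have hs := hasDerivAt_iff_tendsto_slope.1 hd
  have hs2 : Filter.Tendsto (slope f t0) (nhdsWithin t0 (Set.Iio t0)) (nhds d) :=
    hs.mono_left (nhdsWithin_mono _ (by intro x hx; exact fun hc => absurd hc (ne_of_lt hx)))
  refine ge_of_tendsto hs2 ?_
  have hm : Set.Ioo a t0 ∈ nhdsWithin t0 (Set.Iio t0) :=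
    Ioo_mem_nhdsLT_of_mem ⟨ha, le_rfl⟩
  filter_upwards [hm] with s hsm
  have h1 : f s ≤ f t0 := h s hsm.1 hsm.2
  have h2 : s - t0 < 0 := by linarith [hsm.2]
  rw [slope_def_field]
  have : f s - f t0 ≤ 0 := by linarith
  exact div_nonneg_iff.2 (Or.inr ⟨this, h2.le⟩)

end SIS

namespace SIS

/-! ### memX extraction -/

lemma memX_left {κ : ℝ} {k j : ℤ} {w : ℤ → ℝ} (m : memX κ k w) (hj : j < k) :
    uStar κ < w j := by
  obtain ⟨⟨c, hc1, hc2⟩, -, -, -, -⟩ := m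
  exact lt_of_lt_of_le hc1 (hc2 j hj)

lemma memX_right_lt {κ : ℝ} {k j : ℤ} {w : ℤ → ℝ} (m : memX κ k w) (hj : k < j) :
    w j < -uStar κ := by
  obtain ⟨-, -, -, ⟨C, hC1, hC2⟩, -⟩ := m
  exact lt_of_le_of_lt (hC2 j hj) hC1

lemma memX_right_gt {κ : ℝ} {k j : ℤ} {w : ℤ → ℝ} (m : memX κ k w) (hj : k < j) :
    -uStarStar κ < w j := by
  obtain ⟨-, -, ⟨c, hc1, hc2⟩, -, -⟩ := m
  exact lt_of_lt_of_le hc1 (hc2 j hj)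

lemma memX_k_lt {κ : ℝ} {k : ℤ} {w : ℤ → ℝ} (m : memX κ k w) : w k < uStar κ := m.2.2.2.2.2

lemma memX_k_gt {κ : ℝ} {k : ℤ} {w : ℤ → ℝ} (m : memX κ k w) : -uStarStar κ < w k :=
  m.2.2.2.2.1

lemma memX_all_gt {κ : ℝ} (hκ : 0 < κ) {k j : ℤ} {w : ℤ → ℝ} (m : memX κ k w) :
    -uStarStar κ < w j := by
  rcases lt_trichotomy j k with hj | hj | hj
  · have := memX_left m hj
    have h1 := uStar_pos hκ
    have h2 := uStar_lt_uStarStar hκ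
    linarith
  · subst hj; exact memX_k_gt m
  · exact memX_right_gt m hj

section IsSISFacts

variable {κ : ℝ} {u : ℝ → ℤ → ℝ} {tstar : ℕ → WithTop ℝ}

lemma contU (h : IsSIS κ u tstar) {t : ℝ} (ht : 0 ≤ t) (j : ℤ) :
    ContinuousAt (fun s => u s j) t := (h.sol.1 t ht j).continuousAt

lemma contP (hκ : 0 < κ) (h : IsSIS κ u tstar) {t : ℝ} (ht : 0 ≤ t) (j : ℤ) :
    ContinuousAt (fun s => Phi' κ (u s j)) t :=
  ((continuous_Phi' hκ).continuousAt).comp (contU h ht j)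

lemma contLap (hκ : 0 < κ) (h : IsSIS κ u tstar) {t : ℝ} (ht : 0 ≤ t) (j : ℤ) :
    ContinuousAt (fun s => lap (fun i => Phi' κ (u s i)) j) t := by
  unfold lap
  exact ((contP hκ h ht (j+1)).add (contP hκ h ht (j-1))).sub
    ((continuous_const.continuousAt).mul (contP hκ h ht j))

lemma contLapOn (hκ : 0 < κ) (h : IsSIS κ u tstar) {a b : ℝ} (ha : 0 ≤ a) (j : ℤ) :
    ContinuousOn (fun s => lap (fun i => Phi' κ (u s i)) j) (Set.Icc a b) := by
  intro t ht
  exact (contLap hκ h (le_trans ha ht.1) j).continuousWithinAt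

lemma lapIntegrable (hκ : 0 < κ) (h : IsSIS κ u tstar) {a b : ℝ} (ha : 0 ≤ a)
    (hab : a ≤ b) (j : ℤ) :
    IntervalIntegrable (fun s => lap (fun i => Phi' κ (u s i)) j) MeasureTheory.volume a b := by
  apply ContinuousOn.intervalIntegrable
  rw [Set.uIcc_of_le hab]
  exact contLapOn hκ h ha j

lemma ftc (hκ : 0 < κ) (h : IsSIS κ u tstar) {a b : ℝ} (ha : 0 ≤ a) (hab : a ≤ b) (j : ℤ) :
    u b j - u a j = ∫ s in a..b, lap (fun i => Phi' κ (u s i)) j := by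
  symm
  apply intervalIntegral.integral_eq_sub_of_hasDerivAt
  · intro t ht
    rw [Set.uIcc_of_le hab] at ht
    exact h.sol.1 t (le_trans ha ht.1) j
  · exact lapIntegrable hκ h ha hab j

/-! ### time facts -/

lemma tstar_real_nonneg (h : IsSIS κ u tstar) {k : ℕ} {a : ℝ}
    (ha : tstar k = (a : WithTop ℝ)) : 0 ≤ a := by
  rcases Nat.eq_zero_or_pos k with hk | hk
  · subst hk; rw [h.t0] at ha
    have : ((0:ℝ) : WithTop ℝ) = (a : WithTop ℝ) := by
      rw [← ha]; norm_cast
    exact_mod_cast le_of_eq (WithTop.coe_injective this)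
  · have := h.pos k hk
    rw [ha] at this
    have : ((0:ℝ) : WithTop ℝ) < (a : WithTop ℝ) := by
      refine lt_of_le_of_lt ?_ this; norm_num
    exact_mod_cast this.le

lemma prev_time (h : IsSIS κ u tstar) {k : ℕ} (hk : 1 ≤ k) {tk : ℝ}
    (htk : tstar k = (tk : WithTop ℝ)) :
    ∃ a : ℝ, tstar (k-1) = (a : WithTop ℝ) ∧ 0 ≤ a ∧ a < tk := by
  have hle : tstar (k-1) ≤ tstar k := h.mono (Nat.sub_le k 1)
  have hne : tstar (k-1) ≠ ⊤ := by
    rw [htk] at hle; exact fun hc => by simp [hc] at hle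
  obtain ⟨a, ha⟩ := WithTop.ne_top_iff_exists.1 hne
  refine ⟨a, ha.symm, tstar_real_nonneg h ha.symm, ?_⟩
  have hlt : tstar (k-1) < tstar k := by
    rcases Nat.lt_or_ge k 2 with h2 | h2
    · interval_cases k
      · rw [h.t0, htk]
        have := h.pos 1 le_rfl
        rw [htk] at this; simpa using this
    · have hstep := h.step (k-1) (by omega)
      rcases hstep with hc | hc
      · exact absurd hc hne
      · rwa [Nat.sub_add_cancel hk] at hc
  rw [← ha, htk] at hlt
  exact_mod_cast hlt

lemma next_time_lt (h : IsSIS κ u tstar) {k : ℕ} (hk : 1 ≤ k) {tk : ℝ}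
    (htk : tstar k = (tk : WithTop ℝ)) : tstar k < tstar (k+1) := by
  rcases h.step k hk with hc | hc
  · rw [htk] at hc; exact absurd hc (by simp)
  · exact hc

lemma exists_right_window (h : IsSIS κ u tstar) {k : ℕ} (hk : 1 ≤ k) {tk : ℝ}
    (htk : tstar k = (tk : WithTop ℝ)) {δ : ℝ} (hδ : 0 < δ) :
    ∃ b : ℝ, tk < b ∧ b ≤ tk + δ ∧ ∀ s : ℝ, s ≤ b → ((s : WithTop ℝ) < tstar (k+1)) := by
  have hlt := next_time_lt h hk htk
  rw [htk] at hlt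
  rcases eq_or_ne (tstar (k+1)) ⊤ with hT | hT
  · exact ⟨tk + δ, by linarith, le_rfl, fun s _ => by rw [hT]; exact WithTop.coe_lt_top s⟩
  · obtain ⟨T, hTeq⟩ := WithTop.ne_top_iff_exists.1 hT
    rw [← hTeq] at hlt
    have hTk : tk < T := by exact_mod_cast hlt
    refine ⟨min (tk + δ/2) ((tk + T)/2), ?_, ?_, ?_⟩
    · apply lt_min (by linarith) (by linarith)
    · exact le_trans (min_le_left _ _) (by linarith)
    · intro s hs
      rw [← hTeq]
      have : s < T := by
        have := le_trans hs (min_le_right _ _)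
        linarith
      exact_mod_cast this

lemma phase_mem (h : IsSIS κ u tstar) {k : ℕ} (hk : 1 ≤ k) {a s : ℝ}
    (ha : tstar (k-1) = (a : WithTop ℝ)) (h1 : a < s) (h2 : (s : WithTop ℝ) < tstar k) :
    memX κ (k : ℤ) (u s) := by
  apply h.phase k hk (by rw [ha]; exact WithTop.coe_ne_top) s _ h2
  rw [ha]; exact_mod_cast h1

end IsSISFacts

end SIS

namespace SIS

section Exit

variable {κ : ℝ} {u : ℝ → ℤ → ℝ} {tstar : ℕ → WithTop ℝ}

lemma window (h : IsSIS κ u tstar) {k : ℕ} (hk : 1 ≤ k) {tk : ℝ}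
    (htk : tstar k = (tk : WithTop ℝ)) {δ : ℝ} (hδ : 0 < δ) :
    ∃ a b : ℝ, 0 ≤ a ∧ a < tk ∧ tk < b ∧ b ≤ tk + δ ∧
      (∀ s, a < s → s < tk → memX κ (k : ℤ) (u s)) ∧
      (∀ s, tk < s → s ≤ b → memX κ ((k : ℤ) + 1) (u s)) := by
  obtain ⟨a, ha, ha0, halt⟩ := prev_time h hk htk
  obtain ⟨b, hb1, hb2, hb3⟩ := exists_right_window h hk htk hδ
  refine ⟨a, b, ha0, halt, hb1, hb2, ?_, ?_⟩
  · intro s h1 h2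
    apply phase_mem h hk ha h1
    rw [htk]; exact_mod_cast h2
  · intro s h1 h2
    have hmem : memX κ ((k+1 : ℕ) : ℤ) (u s) := by
      have hprev : tstar ((k+1) - 1) = (tk : WithTop ℝ) := by
        rw [Nat.add_sub_cancel]; exact htk
      exact phase_mem h (by omega) hprev h1 (hb3 s h2)
    have : ((k+1 : ℕ) : ℤ) = (k : ℤ) + 1 := by push_cast; ring
    rwa [this] at hmem

lemma tk_nonneg (h : IsSIS κ u tstar) {k : ℕ} {tk : ℝ}
    (htk : tstar k = (tk : WithTop ℝ)) : 0 ≤ tk := tstar_real_nonneg h htk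

/-- The main boundary-value facts at a transition time. -/
lemma trans_facts (hκ : 0 < κ) (h : IsSIS κ u tstar) {k : ℕ} (hk : 1 ≤ k) {tk : ℝ}
    (htk : tstar k = (tk : WithTop ℝ)) :
    u tk (k : ℤ) = uStar κ ∧
    (∀ j : ℤ, j ≤ (k:ℤ) → uStar κ ≤ u tk j) ∧
    (∀ j : ℤ, (k:ℤ) < j → u tk j ≤ -uStar κ) ∧
    (∀ j : ℤ, -uStarStar κ ≤ u tk j) := by
  obtain ⟨a, b, ha0, halt, hb1, hb2, hL, hR⟩ := window h hk htk (δ := 1) one_pos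
  have htk0 : 0 ≤ tk := tk_nonneg h htk
  have hcont : ∀ j : ℤ, ContinuousAt (fun s => u s j) tk := fun j => contU h htk0 j
  have h1 : ∀ j : ℤ, j ≤ (k:ℤ) → uStar κ ≤ u tk j := by
    intro j hj
    apply right_ge (hcont j) hb1
    intro s hs1 hs2
    exact (memX_left (hR s hs1 hs2.le) (by omega)).le
  have h2 : ∀ j : ℤ, (k:ℤ) < j → u tk j ≤ -uStar κ := by
    intro j hj
    apply left_le (hcont j) halt
    intro s hs1 hs2
    exact (memX_right_lt (hL s hs1 hs2) hj).le
  have h3 : ∀ j : ℤ, -uStarStar κ ≤ u tk j := by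
    intro j
    apply left_ge (hcont j) halt
    intro s hs1 hs2
    exact (memX_all_gt hκ (hL s hs1 hs2)).le
  have h4 : u tk (k:ℤ) ≤ uStar κ := by
    apply left_le (hcont _) halt
    intro s hs1 hs2
    exact (memX_k_lt (hL s hs1 hs2)).le
  exact ⟨le_antisymm h4 (h1 _ le_rfl), h1, h2, h3⟩

end Exit

end SIS

namespace SIS

section Harnack

variable {κ : ℝ} {u : ℝ → ℤ → ℝ} {tstar : ℕ → WithTop ℝ}

lemma contUOn (h : IsSIS κ u tstar) {a b : ℝ} (ha : 0 ≤ a) (j : ℤ) :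
    ContinuousOn (fun s => u s j) (Set.Icc a b) := fun t ht =>
  (contU h (le_trans ha ht.1) j).continuousWithinAt

lemma uIntegrable (h : IsSIS κ u tstar) {a b : ℝ} (ha : 0 ≤ a) (hab : a ≤ b) (j : ℤ)
    (c : ℝ) : IntervalIntegrable (fun s => u s j + c) MeasureTheory.volume a b := by
  apply ContinuousOn.intervalIntegrable
  rw [Set.uIcc_of_le hab]
  exact (contUOn h ha j).add continuousOn_const

/-- exponential-weight derivative -/
lemma z_deriv (h : IsSIS κ u tstar) {t : ℝ} (ht : 0 ≤ t) (j : ℤ) :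
    HasDerivAt (fun s => Real.exp (2*s) * (u s j + 2))
      (Real.exp (2*t) * (lap (fun i => Phi' κ (u t i)) j + 2 * (u t j + 2))) t := by
  have h1 : HasDerivAt (fun s : ℝ => Real.exp (2*s)) (Real.exp (2*t) * 2) t := by
    have hin : HasDerivAt (fun s : ℝ => 2*s) 2 t := by
      simpa using (hasDerivAt_id t).const_mul 2
    exact (Real.hasDerivAt_exp (2*t)).comp t hin
  have h2 : HasDerivAt (fun s => u s j + 2) (lap (fun i => Phi' κ (u t i)) j) t :=
    (h.sol.1 t ht j).add_const 2
  have := h1.mul h2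
  rw [show Real.exp (2*t) * (lap (fun i => Phi' κ (u t i)) j + 2 * (u t j + 2)) = Real.exp (2 * t) * 2 * (u t j + 2) + Real.exp (2 * t) * lap (fun i => Phi' κ (u t i)) j by ring]
  exact this

/-- Harnack-type integral bound, then pointwise local upper bound -/
lemma harnack (hκ : 0 < κ) (h : IsSIS κ u tstar) {a b : ℝ} (ha : 0 ≤ a) (hab : a ≤ b)
    (hlow : ∀ s ∈ Set.Icc a b, ∀ j : ℤ, -2 ≤ u s j) :
    ∃ B : ℝ, 0 ≤ B ∧ ∀ t ∈ Set.Icc a b, ∀ j : ℤ, u t j + 2 ≤ B := by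
  obtain ⟨Sb, hSb⟩ := h.sol.2 b (le_trans ha hab)
  obtain ⟨Sa, hSa⟩ := h.sol.2 a ha
  set Δ : ℝ := b - a with hΔ
  have hΔ0 : 0 ≤ Δ := by linarith
  set I : ℝ := Real.exp (2*Δ) * ((Sb + 2) + 4*Δ) with hI
  -- Step 1: ∫_a^b (u s j + 2) ≤ I for every j
  have step1 : ∀ j : ℤ, (∫ s in a..b, (u s j + 2)) ≤ I := by
    intro j
    -- use the weighted function at j-1
    have hftc : Real.exp (2*b) * (u b (j-1) + 2) - Real.exp (2*a) * (u a (j-1) + 2)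
        = ∫ s in a..b, Real.exp (2*s) *
            (lap (fun i => Phi' κ (u s i)) (j-1) + 2 * (u s (j-1) + 2)) := by
      symm
      apply intervalIntegral.integral_eq_sub_of_hasDerivAt
      · intro t htmem
        rw [Set.uIcc_of_le hab] at htmem
        exact z_deriv h (le_trans ha htmem.1) (j-1)
      · apply ContinuousOn.intervalIntegrable
        rw [Set.uIcc_of_le hab]
        apply ContinuousOn.mul
        · fun_prop
        · intro t htmem
          exact ((contLap hκ h (le_trans ha htmem.1) (j-1)).add
            (((contU h (le_trans ha htmem.1) (j-1)).add continuousAt_const).const_mul 2)).continuousWithinAt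
    have hmono : (∫ s in a..b, (Real.exp (2*a) * (u s j + 2) - 4 * Real.exp (2*b)))
        ≤ ∫ s in a..b, Real.exp (2*s) *
            (lap (fun i => Phi' κ (u s i)) (j-1) + 2 * (u s (j-1) + 2)) := by
      apply intervalIntegral.integral_mono_on hab
      · exact ((uIntegrable h ha hab j 2).const_mul _).sub intervalIntegrable_const
      · apply ContinuousOn.intervalIntegrable
        rw [Set.uIcc_of_le hab]
        apply ContinuousOn.mul
        · fun_prop
        · intro t htmem
          exact ((contLap hκ h (le_trans ha htmem.1) (j-1)).add
            (((contU h (le_trans ha htmem.1) (j-1)).add continuousAt_const).const_mul 2)).continuousWithinAt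
      · intro s hs
        have hs0 : 0 ≤ s := le_trans ha hs.1
        have e1 : Real.exp (2*a) ≤ Real.exp (2*s) := by
          apply Real.exp_le_exp.2; linarith [hs.1]
        have e2 : Real.exp (2*s) ≤ Real.exp (2*b) := by
          apply Real.exp_le_exp.2; linarith [hs.2]
        have epos : (0:ℝ) < Real.exp (2*s) := Real.exp_pos _
        -- pointwise inequality:
        -- lap p (j-1) + 2(u_{j-1}+2) ≥ (u_j + 2) - 4
        have hp1 : u s ((j-1)+1) - 1 ≤ Phi' κ (u s ((j-1)+1)) := sub_one_le_Phi' hκ _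
        have hp2 : u s ((j-1)-1) - 1 ≤ Phi' κ (u s ((j-1)-1)) := sub_one_le_Phi' hκ _
        have hp3 : Phi' κ (u s (j-1)) ≤ u s (j-1) + 1 := Phi'_le_add_one hκ _
        have hl1 : -2 ≤ u s ((j-1)-1) := hlow s hs _
        have hkey : (u s j + 2) - 4 ≤
            lap (fun i => Phi' κ (u s i)) (j-1) + 2 * (u s (j-1) + 2) := by
          unfold lap
          have hjj : (j-1)+1 = j := by ring
          rw [hjj] at hp1
          simp only [hjj]
          nlinarith
        calc Real.exp (2*a) * (u s j + 2) - 4 * Real.exp (2*b)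
            ≤ Real.exp (2*s) * (u s j + 2) - 4 * Real.exp (2*s) := by
              have hnn : 0 ≤ u s j + 2 := by linarith [hlow s hs j]
              nlinarith
          _ ≤ Real.exp (2*s) * (lap (fun i => Phi' κ (u s i)) (j-1) + 2 * (u s (j-1) + 2)) := by
              nlinarith
    have hza : 0 ≤ Real.exp (2*a) * (u a (j-1) + 2) := by
      have h1 := hlow a ⟨le_rfl, hab⟩ (j-1)
      have h2 : (0:ℝ) ≤ u a (j-1) + 2 := by linarith
      positivity
    have hzb : Real.exp (2*b) * (u b (j-1) + 2) ≤ Real.exp (2*b) * (Sb + 2) := by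
      have h1 : u b (j-1) ≤ Sb := le_trans (le_abs_self _) (hSb (j-1))
      nlinarith [Real.exp_pos (2*b)]
    have hintval : (∫ s in a..b, (Real.exp (2*a) * (u s j + 2) - 4 * Real.exp (2*b)))
        = Real.exp (2*a) * (∫ s in a..b, (u s j + 2)) - 4 * Real.exp (2*b) * Δ := by
      rw [intervalIntegral.integral_sub (((uIntegrable h ha hab j 2).const_mul _))
        intervalIntegrable_const, intervalIntegral.integral_const_mul,
        intervalIntegral.integral_const]
      rw [smul_eq_mul, hΔ]; ring
    rw [hintval, ← hftc] at hmono
    have hfin : Real.exp (2*a) * (∫ s in a..b, (u s j + 2))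
        ≤ Real.exp (2*b) * (Sb + 2) + 4 * Real.exp (2*b) * Δ := by linarith
    have hea : (0:ℝ) < Real.exp (2*a) := Real.exp_pos _
    have heq : Real.exp (2*b) = Real.exp (2*a) * Real.exp (2*Δ) := by
      rw [← Real.exp_add, hΔ]; ring_nf
    rw [hI]
    rw [heq] at hfin
    nlinarith
  -- Step 2: pointwise bound
  refine ⟨(Sa + 2) + 2*I + 4*Δ, ?_, ?_⟩
  · have hI0 : 0 ≤ I := by
      have h1 : (0:ℝ) ≤ ∫ s in a..b, (u s (0:ℤ) + 2) := by
        apply intervalIntegral.integral_nonneg hab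
        intro s hs; linarith [hlow s hs (0:ℤ)]
      linarith [step1 (0:ℤ)]
    have hSa2 : 0 ≤ Sa + 2 := by
      have := hSa 0; have := abs_nonneg (u a (0:ℤ)); linarith [neg_abs_le (u a (0:ℤ)),
        hlow a ⟨le_rfl, hab⟩ (0:ℤ)]
    linarith
  intro t ht j
  have hta : a ≤ t := ht.1
  have htb : t ≤ b := ht.2
  have hftc2 : u t j - u a j = ∫ s in a..t, lap (fun i => Phi' κ (u s i)) j :=
    ftc hκ h ha hta j
  have hmono2 : (∫ s in a..t, lap (fun i => Phi' κ (u s i)) j)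
      ≤ ∫ s in a..t, ((u s (j+1) + 2) + (u s (j-1) + 2) + 4) := by
    apply intervalIntegral.integral_mono_on hta
    · exact lapIntegrable hκ h ha hta j
    · exact ((uIntegrable h ha hta (j+1) 2).add (uIntegrable h ha hta (j-1) 2)).add
        intervalIntegrable_const
    · intro s hs
      have hsmem : s ∈ Set.Icc a b := ⟨hs.1, le_trans hs.2 htb⟩
      have hp1 : Phi' κ (u s (j+1)) ≤ u s (j+1) + 1 := Phi'_le_add_one hκ _
      have hp2 : Phi' κ (u s (j-1)) ≤ u s (j-1) + 1 := Phi'_le_add_one hκ _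
      have hp3 : u s j - 1 ≤ Phi' κ (u s j) := sub_one_le_Phi' hκ _
      have hl : -2 ≤ u s j := hlow s hsmem j
      unfold lap
      nlinarith
  have hsplit : (∫ s in a..t, ((u s (j+1) + 2) + (u s (j-1) + 2) + 4))
      = (∫ s in a..t, (u s (j+1) + 2)) + (∫ s in a..t, (u s (j-1) + 2)) + 4*(t-a) := by
    rw [intervalIntegral.integral_add (((uIntegrable h ha hta (j+1) 2).add
      (uIntegrable h ha hta (j-1) 2))) intervalIntegrable_const,
      intervalIntegral.integral_add (uIntegrable h ha hta (j+1) 2)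
        (uIntegrable h ha hta (j-1) 2), intervalIntegral.integral_const]
    rw [smul_eq_mul]; ring
  have hextend : ∀ i : ℤ, (∫ s in a..t, (u s i + 2)) ≤ I := by
    intro i
    have h1 : (∫ s in a..t, (u s i + 2)) ≤ ∫ s in a..b, (u s i + 2) := by
      have hadd := intervalIntegral.integral_add_adjacent_intervals
        (uIntegrable h ha hta i 2)
        (by apply ContinuousOn.intervalIntegrable
            rw [Set.uIcc_of_le htb]
            intro x hx
            exact ((contU h (le_trans (le_trans ha hta) hx.1) i).continuousWithinAt).add
              continuousWithinAt_const)
      have h2 : (0:ℝ) ≤ ∫ s in t..b, (u s i + 2) := by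
        apply intervalIntegral.integral_nonneg htb
        intro s hs
        linarith [hlow s ⟨le_trans hta hs.1, hs.2⟩ i]
      linarith
    exact le_trans h1 (step1 i)
  have hua : u a j ≤ Sa := le_trans (le_abs_self _) (hSa j)
  have h4ta : 4*(t-a) ≤ 4*Δ := by rw [hΔ]; linarith
  linarith [hextend (j+1), hextend (j-1)]

end Harnack

end SIS

namespace SIS

section MaxPrinciple

variable {κ : ℝ} {u : ℝ → ℤ → ℝ} {tstar : ℕ → WithTop ℝ}

/-- One short-time step of the maximum principle. -/
lemma maxstep (hκ : 0 < κ) (h : IsSIS κ u tstar) {a b A : ℝ} (ha : 0 ≤ a) (hab : a < b)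
    (hΔ : b - a ≤ 1/4)
    (hlow : ∀ s ∈ Set.Icc a b, ∀ j : ℤ, -2 ≤ u s j)
    (hA : pStar κ ≤ A)
    (hinit : ∀ j : ℤ, Phi' κ (u a j) ≤ A) :
    ∀ t ∈ Set.Icc a b, ∀ j : ℤ, Phi' κ (u t j) ≤ A := by
  obtain ⟨B, hB0, hB⟩ := harnack hκ h ha hab.le hlow
  set g : ℤ → ℝ → ℝ := fun j s => Phi' κ (u s j) with hg
  set SΛ : Set ℝ := {x | ∃ j : ℤ, ∃ t ∈ Set.Icc a b, x = max (g j t - A) 0} with hSΛ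
  have hSne : SΛ.Nonempty := ⟨max (g 0 a - A) 0, 0, a, ⟨le_rfl, hab.le⟩, rfl⟩
  have hSbdd : BddAbove SΛ := by
    refine ⟨max (B - 1 - A) 0, ?_⟩
    rintro x ⟨j, t, ht, rfl⟩
    apply max_le_max _ le_rfl
    have h1 : Phi' κ (u t j) ≤ u t j + 1 := Phi'_le_add_one hκ _
    have h2 : u t j + 2 ≤ B := hB t ht j
    simp only [hg]; linarith
  set ρ : ℝ := sSup SΛ with hρ
  have hρ0 : 0 ≤ ρ := by
    refine le_trans ?_ (le_csSup hSbdd (⟨0, a, ⟨le_rfl, hab.le⟩, rfl⟩))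
    exact le_max_right _ _
  have key : ∀ j : ℤ, ∀ t ∈ Set.Icc a b, max (g j t - A) 0 ≤ 2 * (b - a) * ρ := by
    intro j t ht
    rcases le_or_gt (g j t) A with hle | hgt
    · have hz : max (g j t - A) 0 = 0 := max_eq_right (by linarith)
      rw [hz]
      have hba : (0:ℝ) ≤ b - a := by linarith
      nlinarith
    · have hta : a < t := by
        rcases eq_or_lt_of_le ht.1 with he | hlt
        · exfalso; rw [← he] at hgt; exact absurd (hinit j) (not_le.2 hgt)
        · exact hlt
      set S' : Set ℝ := {s | s ∈ Set.Icc a t ∧ g j s ≤ A} with hS'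
      have hS'ne : S'.Nonempty := ⟨a, ⟨le_rfl, hta.le⟩, hinit j⟩
      have hS'bdd : BddAbove S' := ⟨t, fun s hs => hs.1.2⟩
      set σ : ℝ := sSup S' with hσ
      have hσa : a ≤ σ := le_csSup hS'bdd ⟨⟨le_rfl, hta.le⟩, hinit j⟩
      have hσt : σ ≤ t := csSup_le hS'ne (fun s hs => hs.1.2)
      have hσ0 : 0 ≤ σ := le_trans ha hσa
      have hσcl : σ ∈ closure S' := csSup_mem_closure hS'ne hS'bdd
      have hgsig : g j σ ≤ A := by
        have hne : (nhdsWithin σ S').NeBot := mem_closure_iff_nhdsWithin_neBot.1 hσcl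
        have htend : Filter.Tendsto (g j) (nhdsWithin σ S') (nhds (g j σ)) :=
          (contP hκ h hσ0 j).tendsto.mono_left nhdsWithin_le_nhds
        refine le_of_tendsto htend ?_
        filter_upwards [self_mem_nhdsWithin] with s hs
        exact hs.2
      have hσlt : σ < t := by
        rcases eq_or_lt_of_le hσt with he | hlt
        · exfalso; rw [he] at hgsig; linarith
        · exact hlt
      have hopen : ∀ s, σ < s → s ≤ t → A < g j s := by
        intro s h1 h2
        by_contra hc
        push_neg at hc
        have : s ∈ S' := ⟨⟨le_trans hσa h1.le, h2⟩, hc⟩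
        exact absurd (le_csSup hS'bdd this) (not_le.2 h1)
      have hbranch : ∀ s, σ < s → s ≤ t → u s j = g j s + 1 := by
        intro s h1 h2
        have := upper_of_Phi'_gt hκ (lt_of_le_of_lt hA (hopen s h1 h2))
        simp only [hg]
        linarith [this.1]
      have husig : u σ j = g j σ + 1 := by
        have := right_eq (f := fun s => u s j) (g := fun s => g j s + 1)
          (contU h hσ0 j) ((contP hκ h hσ0 j).add continuousAt_const) hσlt
          (fun s hs1 hs2 => hbranch s hs1 hs2.le)
        exact this
      have hftc : u t j - u σ j = ∫ s in σ..t, lap (fun i => Phi' κ (u s i)) j :=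
        ftc hκ h hσ0 hσlt.le j
      have hbound : (∫ s in σ..t, lap (fun i => Phi' κ (u s i)) j)
          ≤ 2 * ρ * (t - σ) + 2 * ∫ s in σ..t, (A - g j s) := by
        have hmono : (∫ s in σ..t, lap (fun i => Phi' κ (u s i)) j)
            ≤ ∫ s in σ..t, (2 * ρ + 2 * (A - g j s)) := by
          apply intervalIntegral.integral_mono_on hσlt.le
          · exact lapIntegrable hκ h hσ0 hσlt.le j
          · apply ContinuousOn.intervalIntegrable
            rw [Set.uIcc_of_le hσlt.le]
            intro s hs
            exact (continuousAt_const.add ((continuousAt_const.sub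
              (contP hκ h (le_trans hσ0 hs.1) j)).const_mul 2)).continuousWithinAt
          · intro s hs
            have hsab : s ∈ Set.Icc a b := ⟨le_trans hσa hs.1, le_trans hs.2 ht.2⟩
            have h1 : g (j+1) s - A ≤ ρ := by
              have := le_csSup hSbdd (⟨j+1, s, hsab, rfl⟩)
              exact le_trans (le_max_left _ _) this
            have h2 : g (j-1) s - A ≤ ρ := by
              have := le_csSup hSbdd (⟨j-1, s, hsab, rfl⟩)
              exact le_trans (le_max_left _ _) this
            unfold lap
            simp only [hg] at h1 h2 ⊢
            linarith
        have hsplit : (∫ s in σ..t, (2 * ρ + 2 * (A - g j s)))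
            = 2 * ρ * (t - σ) + 2 * ∫ s in σ..t, (A - g j s) := by
          have hint : IntervalIntegrable (fun s => A - g j s) MeasureTheory.volume σ t := by
            apply ContinuousOn.intervalIntegrable
            rw [Set.uIcc_of_le hσlt.le]
            intro s hs
            exact (continuousAt_const.sub (contP hκ h (le_trans hσ0 hs.1) j)).continuousWithinAt
          rw [intervalIntegral.integral_add intervalIntegrable_const (hint.const_mul 2),
            intervalIntegral.integral_const, intervalIntegral.integral_const_mul]
          rw [smul_eq_mul]; ring
        linarith [hsplit ▸ hmono]
      have hneg : (∫ s in σ..t, (A - g j s)) ≤ 0 := by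
        rw [intervalIntegral.integral_of_le hσlt.le]
        have hint : MeasureTheory.IntegrableOn (fun s => A - g j s) (Set.Ioc σ t) := by
          apply MeasureTheory.IntegrableOn.mono_set _ Set.Ioc_subset_Icc_self
          apply ContinuousOn.integrableOn_Icc
          intro s hs
          exact (continuousAt_const.sub (contP hκ h (le_trans hσ0 hs.1) j)).continuousWithinAt
        calc (∫ s in Set.Ioc σ t, (A - g j s))
            ≤ ∫ _ in Set.Ioc σ t, (0:ℝ) := by
              apply MeasureTheory.setIntegral_mono_on hint
                (MeasureTheory.integrableOn_const (by simp)) measurableSet_Ioc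
              intro s hs
              linarith [hopen s hs.1 hs.2]
          _ = 0 := by simp
      have hfinal : g j t - A ≤ 2 * ρ * (t - σ) := by
        have h1 : u t j = g j t + 1 := hbranch t hσlt le_rfl
        have h2 : g j t - g j σ = u t j - u σ j := by rw [h1, husig]; ring
        have h3 : g j t - A ≤ g j t - g j σ := by linarith
        rw [h2, hftc] at h3
        linarith
      have h2ρ : 2 * ρ * (t - σ) ≤ 2 * (b - a) * ρ := by
        have h1 : t - σ ≤ b - a := by
          have := ht.2; linarith
        nlinarith
      have hba : (0:ℝ) ≤ b - a := by linarith
      apply max_le (by linarith) (by nlinarith)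
  have hρle : ρ ≤ 2 * (b-a) * ρ := by
    apply csSup_le hSne
    rintro x ⟨j, t, ht, rfl⟩
    exact key j t ht
  have hρz : ρ ≤ 0 := by nlinarith
  intro t ht j
  have := le_csSup hSbdd (⟨j, t, ht, rfl⟩)
  have h2 : max (g j t - A) 0 ≤ 0 := le_trans this hρz
  have := le_max_left (g j t - A) 0
  simp only [hg] at *
  linarith

end MaxPrinciple

end SIS

namespace SIS

section Global

variable {κ : ℝ} {u : ℝ → ℤ → ℝ} {tstar : ℕ → WithTop ℝ}

lemma phase_max (hκ : 0 < κ) (h : IsSIS κ u tstar) {A a t : ℝ} (hA : pStar κ ≤ A)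
    (ha0 : 0 ≤ a) (hat : a < t)
    (hmem : ∀ s, a < s → s < t → ∀ j : ℤ, -uStarStar κ < u s j)
    (hinit : ∀ j : ℤ, Phi' κ (u a j) ≤ A) :
    ∀ t' ∈ Set.Icc a t, ∀ j : ℤ, Phi' κ (u t' j) ≤ A := by
  have hss2 := uStarStar_lt_two hκ
  have hlow : ∀ s ∈ Set.Icc a t, ∀ j : ℤ, -2 ≤ u s j := by
    intro s hs j
    rcases eq_or_lt_of_le hs.1 with he | hlt
    · subst he
      apply right_ge (contU h ha0 j) hat
      intro s' h1 h2; linarith [hmem s' h1 h2 j]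
    · rcases eq_or_lt_of_le hs.2 with he | hlt2
      · subst he
        apply left_ge (contU h (le_trans ha0 hs.1) j) hat
        intro s' h1 h2; linarith [hmem s' h1 h2 j]
      · linarith [hmem s hlt hlt2 j]
  have main : ∀ n : ℕ, ∀ t' ∈ Set.Icc a (min (a + n * (1/4)) t), ∀ j : ℤ,
      Phi' κ (u t' j) ≤ A := by
    intro n
    induction n with
    | zero =>
      intro t' ht' j
      simp only [Nat.cast_zero, zero_mul, add_zero, min_eq_left hat.le] at ht'
      have : t' = a := le_antisymm ht'.2 ht'.1
      rw [this]; exact hinit j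
    | succ n ih =>
      intro t' ht' j
      push_cast at ht'
      rcases le_or_gt t (a + n * (1/4)) with hc | hc
      · apply ih t' _ j
        refine ⟨ht'.1, ?_⟩
        rw [min_eq_right hc]
        exact le_trans ht'.2 (min_le_right _ _)
      · have hn0 : (0:ℝ) ≤ (n:ℝ) := Nat.cast_nonneg n
        have hL : a ≤ a + (n:ℝ) * (1/4) := by linarith
        have hmint : min (a + ((n:ℝ)+1) * (1/4)) t ≤ t := min_le_right _ _
        have hminl : min (a + ((n:ℝ)+1) * (1/4)) t ≤ a + ((n:ℝ)+1) * (1/4) := min_le_left _ _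
        have hLR : a + (n:ℝ) * (1/4) < min (a + ((n:ℝ)+1) * (1/4)) t :=
          lt_min (by linarith) hc
        have hstep := maxstep hκ h (A := A) (a := a + (n:ℝ)*(1/4))
            (b := min (a + ((n:ℝ)+1) * (1/4)) t) (le_trans ha0 hL) hLR
            (by linarith)
            (fun s hs j => hlow s ⟨le_trans hL hs.1, le_trans hs.2 hmint⟩ j)
            hA
            (fun j => ih (a + (n:ℝ)*(1/4)) ⟨hL, by rw [min_eq_left hc.le]⟩ j)
        rcases le_or_gt t' (a + (n:ℝ) * (1/4)) with hcase | hcase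
        · exact ih t' ⟨ht'.1, by rw [min_eq_left hc.le]; exact hcase⟩ j
        · exact hstep t' ⟨hcase.le, ht'.2⟩ j
  obtain ⟨n, hn⟩ := exists_nat_ge ((t - a) * 4)
  intro t' ht' j
  apply main n t' _ j
  refine ⟨ht'.1, le_min ?_ ht'.2⟩
  have : t - a ≤ n * (1/4) := by linarith
  linarith [ht'.2]

/-- Global maximum principle: Phi'(u) is bounded above by A0 up to any transition time. -/
lemma pmax (hκ : 0 < κ) (h : IsSIS κ u tstar) :
    ∃ A : ℝ, pStar κ ≤ A ∧ ∀ m : ℕ, ∀ t : ℝ, 0 ≤ t → ((t : WithTop ℝ) ≤ tstar m) →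
      ∀ j : ℤ, Phi' κ (u t j) ≤ A := by
  obtain ⟨C0, hC0⟩ := h.sol.2 0 le_rfl
  refine ⟨max (C0 + 1) (pStar κ), le_max_right _ _, ?_⟩
  intro m
  induction m with
  | zero =>
    intro t ht0 htle j
    have ht00 : t ≤ 0 := by
      rw [h.t0] at htle
      have : ((t:WithTop ℝ) ≤ ((0:ℝ) : WithTop ℝ)) := by
        rw [WithTop.coe_zero]; exact htle
      exact_mod_cast this
    have : t = 0 := le_antisymm ht00 ht0
    subst this
    refine le_trans (Phi'_le_add_one hκ _) (le_trans ?_ (le_max_left _ _))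
    linarith [le_trans (le_abs_self _) (hC0 j)]
  | succ m ih =>
    intro t ht0 htle j
    rcases le_or_gt (t : WithTop ℝ) (tstar m) with hc | hc
    · exact ih t ht0 hc j
    · have hne : tstar m ≠ ⊤ := fun hcon => by rw [hcon] at hc; exact absurd hc (by simp)
      obtain ⟨a, ha⟩ := WithTop.ne_top_iff_exists.1 hne
      have ha0 : 0 ≤ a := tstar_real_nonneg h ha.symm
      have hat : a < t := by
        rw [← ha] at hc; exact_mod_cast hc
      have hinit : ∀ j : ℤ, Phi' κ (u a j) ≤ max (C0 + 1) (pStar κ) := by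
        intro j; exact ih a ha0 (by rw [ha]) j
      have hmem : ∀ s, a < s → s < t → ∀ j : ℤ, -uStarStar κ < u s j := by
        intro s h1 h2 j
        have hphase : memX κ ((m+1 : ℕ) : ℤ) (u s) := by
          apply phase_mem h (by omega) (k := m+1) _ h1
          · exact lt_of_lt_of_le (by exact_mod_cast h2) htle
          · show tstar (m + 1 - 1) = _
            rw [Nat.add_sub_cancel]; exact ha.symm
        exact memX_all_gt hκ hphase
      exact phase_max hκ h (le_max_right _ _) ha0 hat hmem hinit t ⟨hat.le, le_rfl⟩ j

end Global

end SIS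

namespace SIS

section Waiting

variable {κ : ℝ} {u : ℝ → ℤ → ℝ} {tstar : ℕ → WithTop ℝ}

lemma waiting (hκ : 0 < κ) (h : IsSIS κ u tstar) :
    ∃ C : ℝ, 0 < C ∧ ∀ k : ℕ, 1 ≤ k → ∀ tk : ℝ, tstar k = (tk : WithTop ℝ) →
      ((tk + C : ℝ) : WithTop ℝ) ≤ tstar (k+1) := by
  obtain ⟨A, hApS, hA⟩ := pmax hκ h
  have hps := pStar_pos hκ
  have hps1 := pStar_lt_one hκ
  have hus := uStar_pos hκ
  have hA3 : 0 < A + 3 := by linarith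
  refine ⟨2 * uStar κ / (A + 3), by positivity, ?_⟩
  intro k hk tk htk
  rcases eq_or_ne (tstar (k+1)) ⊤ with hT | hT
  · rw [hT]; exact le_top
  obtain ⟨T, hTeq⟩ := WithTop.ne_top_iff_exists.1 hT
  have hT' : tstar (k+1) = (T : WithTop ℝ) := hTeq.symm
  have htkT : tk < T := by
    have := next_time_lt h hk htk
    rw [htk, hT'] at this
    exact_mod_cast this
  have htk0 : 0 ≤ tk := tk_nonneg h htk
  obtain ⟨e1, e2, e3, e4⟩ := trans_facts hκ h hk htk
  obtain ⟨f1, f2, f3, f4⟩ := trans_facts hκ h (by omega : 1 ≤ k+1) hT'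
  have hcast : ((k+1 : ℕ) : ℤ) = (k:ℤ)+1 := by push_cast; ring
  rw [hcast] at f1 f2 f3
  -- u T (k+1) = uStar, u tk (k+1) ≤ -uStar
  have hutk : u tk ((k:ℤ)+1) ≤ -uStar κ := e3 _ (by omega)
  -- interior membership
  have hintmem : ∀ s, tk < s → s < T → memX κ ((k:ℤ)+1) (u s) := by
    intro s h1 h2
    have : memX κ ((k+1 : ℕ) : ℤ) (u s) := by
      apply phase_mem h (by omega) (k := k+1) _ h1
      · rw [hT']; exact_mod_cast h2
      · show tstar (k + 1 - 1) = _
        rw [Nat.add_sub_cancel]; exact htk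
    rwa [hcast] at this
  -- integrand bound
  have hbound : ∀ s ∈ Set.Icc tk T, lap (fun i => Phi' κ (u s i)) ((k:ℤ)+1) ≤ A + 3 := by
    intro s hs
    have hs0 : 0 ≤ s := le_trans htk0 hs.1
    have hp2 : u s ((k:ℤ)+1+1) ≤ -uStar κ := by
      rcases eq_or_lt_of_le hs.1 with he | hlt
      · rw [← he]; exact e3 ((k:ℤ)+1+1) (by omega)
      · rcases eq_or_lt_of_le hs.2 with he2 | hlt2
        · rw [he2]; exact f3 ((k:ℤ)+1+1) (by omega)
        · exact (memX_right_lt (hintmem s hlt hlt2) (by omega)).le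
    have hp2' : Phi' κ (u s ((k:ℤ)+1+1)) ≤ pStar κ :=
      Phi'_le_pStar_of_le_uStar hκ (le_trans hp2 (by linarith))
    have hpk : Phi' κ (u s ((k:ℤ)+1-1)) ≤ A := by
      apply hA (k+1) s hs0
      rw [hT']; exact_mod_cast hs.2
    have hmid : -uStarStar κ ≤ u s ((k:ℤ)+1) := by
      rcases eq_or_lt_of_le hs.1 with he | hlt
      · rw [← he]; exact e4 _
      · rcases eq_or_lt_of_le hs.2 with he2 | hlt2
        · rw [he2]; exact f4 _
        · exact (memX_all_gt hκ (hintmem s hlt hlt2)).le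
    have hmid' : -pStar κ ≤ Phi' κ (u s ((k:ℤ)+1)) := neg_pStar_le_Phi' hκ hmid
    unfold lap
    linarith
  have hftc : u T ((k:ℤ)+1) - u tk ((k:ℤ)+1)
      = ∫ s in tk..T, lap (fun i => Phi' κ (u s i)) ((k:ℤ)+1) :=
    ftc hκ h htk0 htkT.le _
  have hint : (∫ s in tk..T, lap (fun i => Phi' κ (u s i)) ((k:ℤ)+1))
      ≤ (A + 3) * (T - tk) := by
    have := intervalIntegral.integral_mono_on htkT.le
      (lapIntegrable hκ h htk0 htkT.le ((k:ℤ)+1)) intervalIntegrable_const hbound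
    rwa [intervalIntegral.integral_const, smul_eq_mul, mul_comm] at this
  have hgap : 2 * uStar κ ≤ (A + 3) * (T - tk) := by
    have h1 : u T ((k:ℤ)+1) = uStar κ := f1
    nlinarith [hftc, hint]
  have hfin : tk + 2 * uStar κ / (A + 3) ≤ T := by
    have h2 : 2 * uStar κ / (A + 3) ≤ T - tk := by
      rw [div_le_iff₀ hA3]; nlinarith
    linarith
  rw [hT']
  exact_mod_cast hfin

end Waiting

end SIS

set_option maxHeartbeats 1000000 in
lemma _dummy_heartbeat : True := trivial

namespace SIS

set_option maxHeartbeats 2000000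

section LapPos

variable {κ : ℝ} {u : ℝ → ℤ → ℝ} {tstar : ℕ → WithTop ℝ}

lemma theta_shift (a b : ℕ) (hab : b ≤ a + 1) : (1/3:ℝ)^a ≤ 3 * (1/3:ℝ)^b := by
  have h1 : (1/3:ℝ)^(a+1) ≤ (1/3:ℝ)^b :=
    pow_le_pow_of_le_one (by norm_num) (by norm_num) hab
  have h2 : (1/3:ℝ)^(a+1) = (1/3) * (1/3:ℝ)^a := by ring
  nlinarith [pow_nonneg (by norm_num : (0:ℝ) ≤ 1/3) a]

lemma lap_pos (hκ : 0 < κ) (h : IsSIS κ u tstar) {k : ℕ} (hk : 1 ≤ k) {tk : ℝ}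
    (htk : tstar k = (tk : WithTop ℝ)) :
    0 < lap (fun i => Phi' κ (u tk i)) (k : ℤ) := by
  obtain ⟨a, b, ha0, halt, hb1, hb2, hL, hR⟩ := window h hk htk (δ := 1/12) (by norm_num)
  have htk0 : 0 ≤ tk := tk_nonneg h htk
  obtain ⟨e1, e2, e3, e4⟩ := trans_facts hκ h hk htk
  have hups := uStar_add_pStar hκ
  have hsse := uStarStar_eq hκ
  have hss2 := uStarStar_lt_two hκ
  have hus := uStar_pos hκ
  have hps := pStar_pos hκ
  have hls := uStar_lt_uStarStar hκ
  have hge : 0 ≤ lap (fun i => Phi' κ (u tk i)) (k : ℤ) := by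
    apply deriv_nonneg_of_left_le (h.sol.1 tk htk0 (k:ℤ)) halt
    intro s h1 h2
    rw [e1]
    exact (memX_k_lt (hL s h1 h2)).le
  rcases lt_or_eq_of_le hge with hlt | heq
  · exact hlt
  exfalso
  -- equality case: derive the pinned profile
  have pk : Phi' κ (u tk (k:ℤ)) = -pStar κ := by rw [e1]; exact Phi'_uStar hκ
  have pm1ge : uStar κ ≤ u tk ((k:ℤ)-1) := e2 _ (by omega)
  have pp1le : u tk ((k:ℤ)+1) ≤ -uStar κ := e3 _ (by omega)
  have pp1ge : -uStarStar κ ≤ u tk ((k:ℤ)+1) := e4 _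
  have hpm1 : -pStar κ ≤ Phi' κ (u tk ((k:ℤ)-1)) := by
    rw [Phi'_of_ge hκ pm1ge]; linarith
  have hpp1 : -pStar κ ≤ Phi' κ (u tk ((k:ℤ)+1)) := neg_pStar_le_Phi' hκ pp1ge
  have hlap : Phi' κ (u tk ((k:ℤ)+1)) + Phi' κ (u tk ((k:ℤ)-1))
      - 2 * Phi' κ (u tk (k:ℤ)) = 0 := heq.symm
  rw [pk] at hlap
  have hm1p : Phi' κ (u tk ((k:ℤ)-1)) = -pStar κ := by linarith
  have hp1p : Phi' κ (u tk ((k:ℤ)+1)) = -pStar κ := by linarith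
  have hm1val : u tk ((k:ℤ)-1) = uStar κ := eq_uStar_of_Phi' hκ pm1ge hm1p
  have hp1val : u tk ((k:ℤ)+1) = -uStarStar κ := eq_neg_uStarStar_of_Phi' hκ pp1le hp1p
  -- local-minimum ⇒ zero derivative lemmas
  have lapzeroL : ∀ j : ℤ, j < (k:ℤ) → u tk j = uStar κ →
      lap (fun i => Phi' κ (u tk i)) j = 0 := by
    intro j hj hval
    apply deriv_zero_of_localmin (h.sol.1 tk htk0 j) halt hb1
    intro s h1 h2
    rcases lt_trichotomy s tk with hc | hc | hc
    · rw [hval]; exact (memX_left (hL s h1 hc) hj).le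
    · rw [hc]
    · rw [hval]; exact (memX_left (hR s hc h2.le) (by omega)).le
  have lapzeroR : ∀ j : ℤ, (k:ℤ) < j → u tk j = -uStarStar κ →
      lap (fun i => Phi' κ (u tk i)) j = 0 := by
    intro j _ hval
    apply deriv_zero_of_localmin (h.sol.1 tk htk0 j) halt hb1
    intro s h1 h2
    rcases lt_trichotomy s tk with hc | hc | hc
    · rw [hval]; exact (memX_all_gt hκ (hL s h1 hc)).le
    · rw [hc]
    · rw [hval]; exact (memX_all_gt hκ (hR s hc h2.le)).le
  -- leftward pinning
  have main1 : ∀ n : ℕ, u tk ((k:ℤ) - n) = uStar κ ∧ u tk ((k:ℤ) - n - 1) = uStar κ := by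
    intro n
    induction n with
    | zero => simpa using ⟨e1, hm1val⟩
    | succ n ih =>
      have hc : ((n+1:ℕ) : ℤ) = (n:ℤ) + 1 := by push_cast; ring
      constructor
      · rw [hc]
        have := ih.2
        convert this using 2
        ring
      · rw [hc]
        have hz := lapzeroL ((k:ℤ) - n - 1) (by omega) ih.2
        simp only [lap] at hz
        have hjp : (k:ℤ) - n - 1 + 1 = (k:ℤ) - n := by ring
        rw [hjp] at hz
        have v1 : Phi' κ (u tk ((k:ℤ) - n)) = -pStar κ := by
          rw [ih.1]; exact Phi'_uStar hκ
        have v2 : Phi' κ (u tk ((k:ℤ) - n - 1)) = -pStar κ := by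
          rw [ih.2]; exact Phi'_uStar hκ
        have v3 : Phi' κ (u tk ((k:ℤ) - n - 1 - 1)) = -pStar κ := by
          rw [v1, v2] at hz; linarith
        have h4 : uStar κ ≤ u tk ((k:ℤ) - n - 1 - 1) := e2 _ (by omega)
        have := eq_uStar_of_Phi' hκ h4 v3
        convert this using 2
        ring
  have hpin1 : ∀ j : ℤ, j ≤ (k:ℤ) → u tk j = uStar κ := by
    intro j hj
    have := (main1 ((k:ℤ) - j).toNat).1
    rwa [Int.toNat_of_nonneg (by omega), show (k:ℤ) - ((k:ℤ) - j) = j from by ring] at this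
  -- rightward pinning
  have main2 : ∀ n : ℕ, u tk ((k:ℤ) + 1 + n) = -uStarStar κ ∧
      Phi' κ (u tk ((k:ℤ) + n)) = -pStar κ := by
    intro n
    induction n with
    | zero =>
      constructor
      · simpa using hp1val
      · simpa using pk
    | succ n ih =>
      have hc : ((n+1:ℕ) : ℤ) = (n:ℤ) + 1 := by push_cast; ring
      have hz := lapzeroR ((k:ℤ) + 1 + n) (by omega) ih.1
      simp only [lap] at hz
      have hjm : (k:ℤ) + 1 + n - 1 = (k:ℤ) + n := by ring
      rw [hjm] at hz
      have v1 : Phi' κ (u tk ((k:ℤ) + 1 + n)) = -pStar κ := by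
        rw [ih.1]; exact Phi'_neg_uStarStar hκ
      have v3 : Phi' κ (u tk ((k:ℤ) + 1 + n + 1)) = -pStar κ := by
        rw [v1, ih.2] at hz; linarith
      have h4 : u tk ((k:ℤ) + 1 + n + 1) ≤ -uStar κ := e3 _ (by omega)
      have hval := eq_neg_uStarStar_of_Phi' hκ h4 v3
      constructor
      · rw [hc]
        rw [show (k:ℤ) + 1 + ((n:ℤ)+1) = (k:ℤ) + 1 + (n:ℤ) + 1 from by ring]
        exact hval
      · rw [hc]
        have : (k:ℤ) + ((n:ℤ)+1) = (k:ℤ) + 1 + n := by ring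
        rw [this, ih.1]
        exact Phi'_neg_uStarStar hκ
  have hpin2 : ∀ j : ℤ, (k:ℤ) < j → u tk j = -uStarStar κ := by
    intro j hj
    have := (main2 (j - (k:ℤ) - 1).toNat).1
    rwa [Int.toNat_of_nonneg (by omega),
      show (k:ℤ) + 1 + (j - (k:ℤ) - 1) = j from by ring] at this
  -- lower bound for pinned profile
  have hpinlow : ∀ j : ℤ, -uStarStar κ ≤ u tk j := by
    intro j
    rcases le_or_gt j (k:ℤ) with hj | hj
    · rw [hpin1 j hj]; linarith
    · rw [hpin2 j hj]
  -- monotonicity from the pinned profile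
  have hw0 : ∀ t ∈ Set.Icc tk b, ∀ j : ℤ, u tk j ≤ u t j := by
    intro t ht j
    rcases eq_or_lt_of_le ht.1 with he | hlt
    · rw [← he]
    · have hm := hR t hlt ht.2
      rcases le_or_gt j (k:ℤ) with hj | hj
      · rw [hpin1 j hj]; exact (memX_left hm (by omega)).le
      · rw [hpin2 j hj]; exact (memX_all_gt hκ hm).le
  have hlow2 : ∀ t ∈ Set.Icc tk b, ∀ j : ℤ, -2 ≤ u t j := by
    intro t ht j
    have := hw0 t ht j
    have := hpinlow j
    linarith
  obtain ⟨B, hB0, hB⟩ := harnack hκ h htk0 hb1.le hlow2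
  have hwB : ∀ j : ℤ, ∀ t ∈ Set.Icc tk b, u t j - u tk j ≤ B := by
    intro j t ht
    have h1 := hB t ht j
    have h2 := hpinlow j
    linarith
  set M : ℤ → ℝ := fun j => sSup ((fun t => u t j - u tk j) '' Set.Icc tk b) with hM
  have hIccne : tk ∈ Set.Icc tk b := ⟨le_rfl, hb1.le⟩
  have hMne : ∀ j : ℤ, ((fun t => u t j - u tk j) '' Set.Icc tk b).Nonempty :=
    fun j => ⟨_, ⟨tk, hIccne, rfl⟩⟩
  have hMbdd : ∀ j : ℤ, BddAbove ((fun t => u t j - u tk j) '' Set.Icc tk b) := by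
    intro j
    refine ⟨B, ?_⟩
    rintro x ⟨t, ht, rfl⟩
    exact hwB j t ht
  have hMB : ∀ j, M j ≤ B := by
    intro j
    apply csSup_le (hMne j)
    rintro x ⟨t, ht, rfl⟩
    exact hwB j t ht
  have hM0 : ∀ j, 0 ≤ M j := by
    intro j
    have : (0:ℝ) = u tk j - u tk j := by ring
    rw [this]
    exact le_csSup (hMbdd j) ⟨tk, hIccne, rfl⟩
  have hMge : ∀ j, ∀ t ∈ Set.Icc tk b, u t j - u tk j ≤ M j :=
    fun j t ht => le_csSup (hMbdd j) ⟨t, ht, rfl⟩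
  -- v ≤ w
  have hvw : ∀ t ∈ Set.Icc tk b, ∀ j : ℤ,
      Phi' κ (u t j) + pStar κ ≤ u t j - u tk j ∧ 0 ≤ Phi' κ (u t j) + pStar κ := by
    intro t ht j
    have hu := hw0 t ht j
    have hul : -uStarStar κ ≤ u t j := le_trans (hpinlow j) hu
    constructor
    · rcases le_or_gt j (k:ℤ) with hj | hj
      · have hpj := hpin1 j hj
        rw [hpj] at hu
        rw [Phi'_of_ge hκ hu, hpj]
        linarith
      · have hpj := hpin2 j hj
        have := Phi'_le_add_one hκ (u t j)
        rw [hpj]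
        linarith
    · linarith [neg_pStar_le_Phi' hκ hul]
  set Δ : ℝ := b - tk with hΔdef
  have hΔ0 : 0 < Δ := by simp only [hΔdef]; linarith
  have hΔ12 : Δ ≤ 1/12 := by simp only [hΔdef]; linarith
  have hMkey : ∀ j : ℤ, M j ≤ Δ * (M (j+1) + M (j-1)) := by
    intro j
    apply csSup_le (hMne j)
    rintro x ⟨t, ht, rfl⟩
    have hftc := ftc hκ h htk0 ht.1 j
    have hpt : ∀ s ∈ Set.Icc tk t, lap (fun i => Phi' κ (u s i)) j
        ≤ M (j+1) + M (j-1) := by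
      intro s hs
      have hsmem : s ∈ Set.Icc tk b := ⟨hs.1, le_trans hs.2 ht.2⟩
      have h1 := hvw s hsmem (j+1)
      have h2 := hvw s hsmem (j-1)
      have h3 := hvw s hsmem j
      have h4 := hMge (j+1) s hsmem
      have h5 := hMge (j-1) s hsmem
      unfold lap
      linarith [h1.1, h2.1, h3.2]
    have hintle : (∫ s in tk..t, lap (fun i => Phi' κ (u s i)) j)
        ≤ (M (j+1) + M (j-1)) * (t - tk) := by
      have hmono := intervalIntegral.integral_mono_on ht.1
        (lapIntegrable hκ h htk0 ht.1 j) intervalIntegrable_const hpt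
      rwa [intervalIntegral.integral_const, smul_eq_mul, mul_comm] at hmono
    have hend : u t j - u tk j ≤ (M (j+1) + M (j-1)) * (t - tk) := by
      rw [hftc]; exact hintle
    have htt : t - tk ≤ Δ := by simp only [hΔdef]; linarith [ht.2]
    have hMM : 0 ≤ M (j+1) + M (j-1) := by linarith [hM0 (j+1), hM0 (j-1)]
    calc u t j - u tk j ≤ (M (j+1) + M (j-1)) * (t - tk) := hend
      _ ≤ (M (j+1) + M (j-1)) * Δ := by nlinarith
      _ = Δ * (M (j+1) + M (j-1)) := by ring
  -- weighted series
  set θ : ℤ → ℝ := fun j => (1/3:ℝ)^j.natAbs with hθ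
  have hθpos : ∀ j, 0 < θ j := fun j => pow_pos (by norm_num) _
  have hsummθ : Summable θ := by
    apply Summable.of_nat_of_neg
    · simpa [hθ] using summable_geometric_of_lt_one (by norm_num : (0:ℝ) ≤ 1/3)
        (by norm_num)
    · simpa [hθ] using summable_geometric_of_lt_one (by norm_num : (0:ℝ) ≤ 1/3)
        (by norm_num)
  have hsum : Summable (fun j : ℤ => θ j * M j) := by
    apply Summable.of_nonneg_of_le
      (fun j => mul_nonneg (hθpos j).le (hM0 j))
      (fun j => ?_) (hsummθ.mul_left B)
    calc θ j * M j ≤ θ j * B := by nlinarith [hθpos j, hMB j, hM0 j]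
      _ = B * θ j := by ring
  have hsump : Summable (fun j : ℤ => θ j * M (j+1)) := by
    apply Summable.of_nonneg_of_le
      (fun j => mul_nonneg (hθpos j).le (hM0 (j+1)))
      (fun j => ?_) (hsummθ.mul_left B)
    calc θ j * M (j+1) ≤ θ j * B := by nlinarith [hθpos j, hMB (j+1), hM0 (j+1)]
      _ = B * θ j := by ring
  have hsumm : Summable (fun j : ℤ => θ j * M (j-1)) := by
    apply Summable.of_nonneg_of_le
      (fun j => mul_nonneg (hθpos j).le (hM0 (j-1)))
      (fun j => ?_) (hsummθ.mul_left B)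
    calc θ j * M (j-1) ≤ θ j * B := by nlinarith [hθpos j, hMB (j-1), hM0 (j-1)]
      _ = B * θ j := by ring
  set E : ℝ := ∑' j : ℤ, θ j * M j with hE
  have hE0 : 0 ≤ E := tsum_nonneg (fun j => mul_nonneg (hθpos j).le (hM0 j))
  -- shifted sums
  have hshiftp : Summable (fun i : ℤ => θ (i-1) * M i) := by
    apply Summable.of_nonneg_of_le
      (fun i => mul_nonneg (hθpos (i-1)).le (hM0 i))
      (fun i => ?_) (hsum.mul_left 3)
    have hsh : θ (i-1) ≤ 3 * θ i := by
      apply theta_shift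
      omega
    nlinarith [hM0 i, hθpos (i-1), hθpos i]
  have hshiftm : Summable (fun i : ℤ => θ (i+1) * M i) := by
    apply Summable.of_nonneg_of_le
      (fun i => mul_nonneg (hθpos (i+1)).le (hM0 i))
      (fun i => ?_) (hsum.mul_left 3)
    have hsh : θ (i+1) ≤ 3 * θ i := by
      apply theta_shift
      omega
    nlinarith [hM0 i, hθpos (i+1), hθpos i]
  have heq1 : (∑' j : ℤ, θ j * M (j+1)) = ∑' i : ℤ, θ (i-1) * M i := by
    rw [← Equiv.tsum_eq (Equiv.addRight (1:ℤ)) (fun i => θ (i-1) * M i)]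
    apply tsum_congr
    intro j
    simp [Equiv.coe_addRight]
  have heq2 : (∑' j : ℤ, θ j * M (j-1)) = ∑' i : ℤ, θ (i+1) * M i := by
    rw [← Equiv.tsum_eq (Equiv.subRight (1:ℤ)) (fun i => θ (i+1) * M i)]
    apply tsum_congr
    intro j
    simp [Equiv.subRight_apply, sub_add_cancel]
  have hS1 : (∑' j : ℤ, θ j * M (j+1)) ≤ 3 * E := by
    rw [heq1, hE, ← tsum_mul_left]
    apply Summable.tsum_le_tsum _ hshiftp (hsum.mul_left 3)
    intro i
    have hsh : θ (i-1) ≤ 3 * θ i := by apply theta_shift; omega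
    have := hM0 i
    nlinarith
  have hS2 : (∑' j : ℤ, θ j * M (j-1)) ≤ 3 * E := by
    rw [heq2, hE, ← tsum_mul_left]
    apply Summable.tsum_le_tsum _ hshiftm (hsum.mul_left 3)
    intro i
    have hsh : θ (i+1) ≤ 3 * θ i := by apply theta_shift; omega
    have := hM0 i
    nlinarith
  have hEle : E ≤ Δ * ((∑' j : ℤ, θ j * M (j+1)) + (∑' j : ℤ, θ j * M (j-1))) := by
    rw [hE]
    have h1 : (∑' j : ℤ, θ j * M j) ≤ ∑' j : ℤ, Δ * (θ j * M (j+1) + θ j * M (j-1)) := by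
      apply Summable.tsum_le_tsum _ hsum ((hsump.add hsumm).mul_left Δ)
      intro j
      have := hMkey j
      have := hθpos j
      nlinarith
    rw [tsum_mul_left, Summable.tsum_add hsump hsumm] at h1
    exact h1
  have hcontr : E ≤ (1/2) * E := by
    have hsum6 : (∑' j : ℤ, θ j * M (j+1)) + (∑' j : ℤ, θ j * M (j-1)) ≤ 6 * E := by
      linarith
    have hsumpos : 0 ≤ (∑' j : ℤ, θ j * M (j+1)) + (∑' j : ℤ, θ j * M (j-1)) := by
      have p1 : 0 ≤ ∑' j : ℤ, θ j * M (j+1) :=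
        tsum_nonneg (fun j => mul_nonneg (hθpos j).le (hM0 (j+1)))
      have p2 : 0 ≤ ∑' j : ℤ, θ j * M (j-1) :=
        tsum_nonneg (fun j => mul_nonneg (hθpos j).le (hM0 (j-1)))
      linarith
    nlinarith
  have hEzero : E ≤ 0 := by linarith
  have hMk0 : M (k:ℤ) ≤ 0 := by
    have h1 : θ (k:ℤ) * M (k:ℤ) ≤ E :=
      Summable.le_tsum hsum (k:ℤ) (fun j _ => mul_nonneg (hθpos j).le (hM0 j))
    nlinarith [hθpos (k:ℤ)]
  -- but u b k > uStar = u tk k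
  have hfin : uStar κ < u b (k:ℤ) := memX_left (hR b hb1 le_rfl) (by omega)
  have := hMge (k:ℤ) b ⟨hb1.le, le_rfl⟩
  rw [e1] at this
  linarith

end LapPos

end SIS

namespace SIS

section Part2

variable {κ : ℝ} {u : ℝ → ℤ → ℝ} {tstar : ℕ → WithTop ℝ}

lemma eq_neg_uStar_of_le (hκ : 0 < κ) {x : ℝ} (hx : x ≤ -uStar κ)
    (hp : Phi' κ x = pStar κ) : x = -uStar κ := by
  rw [Phi'_of_le _ hx] at hp
  have := uStar_add_pStar hκ
  linarith

lemma part2 (hκ : 0 < κ) (h : IsSIS κ u tstar) {C : ℝ} (hC : 0 < C)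
    (hwait : ∀ k : ℕ, 1 ≤ k → ∀ tk : ℝ, tstar k = (tk : WithTop ℝ) →
      ((tk + C : ℝ) : WithTop ℝ) ≤ tstar (k+1)) :
    ∀ k : ℕ, 1 ≤ k → ∀ t : ℝ, 0 < t → u t (k : ℤ) = -uStar κ →
      0 ≤ lap (fun i => Phi' κ (u t i)) (k : ℤ) →
      uStarStar κ < u t ((k : ℤ) - 1) := by
  intro k hk t ht0 hu hlap
  have hus := uStar_pos hκ
  have hps := pStar_pos hκ
  have hups := uStar_add_pStar hκ
  have hsse := uStarStar_eq hκ
  -- no accumulation: some transition time exceeds t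
  have hex : ∃ m : ℕ, (t : WithTop ℝ) < tstar m := by
    by_contra hall
    push_neg at hall
    have hfin : ∀ m : ℕ, ∃ s : ℝ, tstar m = (s : WithTop ℝ) := by
      intro m
      rcases eq_or_ne (tstar m) ⊤ with hc | hc
      · exfalso
        have := hall m
        rw [hc] at this
        exact absurd this (by simp)
      · obtain ⟨s, hs⟩ := WithTop.ne_top_iff_exists.1 hc
        exact ⟨s, hs.symm⟩
    obtain ⟨t1, ht1⟩ := hfin 1
    have claim : ∀ n : ℕ, ((t1 + n*C : ℝ) : WithTop ℝ) ≤ tstar (1+n) := by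
      intro n
      induction n with
      | zero => simp [ht1]
      | succ n ih =>
        obtain ⟨s, hs⟩ := hfin (1+n)
        have hts : t1 + n*C ≤ s := by
          rw [hs] at ih; exact_mod_cast ih
        have hw := hwait (1+n) (by omega) s hs
        have h1 : ((t1 + (n+1 : ℕ)*C : ℝ) : WithTop ℝ) ≤ ((s + C : ℝ) : WithTop ℝ) := by
          apply WithTop.coe_le_coe.2
          push_cast
          linarith
        have h2 : (1+n)+1 = 1+(n+1) := by omega
        rw [h2] at hw
        exact le_trans h1 hw
    obtain ⟨n, hn⟩ := exists_nat_ge ((t - t1)/C + 1)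
    have hlt : t < t1 + n*C := by
      have h1 : (t - t1)/C + 1 ≤ n := hn
      have h2 : (t - t1)/C < n := by linarith
      have h3 : t - t1 < n * C := by
        rw [div_lt_iff₀ hC] at h2; linarith
      linarith
    have hle := hall (1+n)
    have := le_trans (claim n) hle
    have : t1 + n*C ≤ t := by exact_mod_cast this
    linarith
  -- minimal such index
  classical
  let M := Nat.find hex
  have hM : (t : WithTop ℝ) < tstar M := Nat.find_spec hex
  have hMmin : ∀ m : ℕ, m < M → tstar m ≤ (t : WithTop ℝ) := by
    intro m hm
    have := Nat.find_min hex hm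
    exact not_lt.1 this
  have hM1 : 1 ≤ M := by
    rcases Nat.eq_zero_or_pos M with h0 | h1
    · exfalso
      have hM' : ((t : ℝ) : WithTop ℝ) < tstar 0 := by rw [← h0]; exact hM
      rw [h.t0] at hM'
      have ht00 : (t : WithTop ℝ) < ((0:ℝ) : WithTop ℝ) := by
        rwa [WithTop.coe_zero]
      have : t < 0 := by exact_mod_cast ht00
      linarith
    · exact h1
  have hprevle : tstar (M-1) ≤ (t : WithTop ℝ) := hMmin (M-1) (by omega)
  have hprevne : tstar (M-1) ≠ ⊤ := by
    intro hc; rw [hc] at hprevle; exact absurd hprevle (by simp)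
  obtain ⟨c, hc⟩ := WithTop.ne_top_iff_exists.1 hprevne
  have hct : c ≤ t := by rw [← hc] at hprevle; exact_mod_cast hprevle
  rcases eq_or_lt_of_le hct with hceq | hclt
  · -- t is the transition time tstar (M-1)
    exfalso
    have hM2 : 2 ≤ M := by
      by_contra hc2
      push_neg at hc2
      interval_cases M
      · have : tstar 0 = ((t:ℝ) : WithTop ℝ) := by rw [← hc, hceq]
        rw [h.t0] at this
        have : ((0:ℝ) : WithTop ℝ) = (t : WithTop ℝ) := by rw [← this, WithTop.coe_zero]
        have : (0:ℝ) = t := by exact_mod_cast this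
        linarith
    set m : ℕ := M - 1 with hm
    have hm1 : 1 ≤ m := by omega
    have htm : tstar m = (t : WithTop ℝ) := by rw [← hc, hceq]
    obtain ⟨a, b, ha0, halt, hb1, hb2, hL, hR⟩ := window h hm1 htm (δ := 1) one_pos
    obtain ⟨g1, g2, g3, g4⟩ := trans_facts hκ h hm1 htm
    have ht00 : 0 ≤ t := ht0.le
    -- k must satisfy m < k
    have hmk : (m:ℤ) < (k:ℤ) := by
      by_contra hcon
      push_neg at hcon
      have := g2 (k:ℤ) hcon
      rw [hu] at this
      linarith
    rcases eq_or_lt_of_le (by omega : (m:ℤ) + 1 ≤ (k:ℤ)) with hkm1 | hkm2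
    · -- k = m+1 : direct contradiction
      have hpk : Phi' κ (u t (k:ℤ)) = pStar κ := by rw [hu]; exact Phi'_neg_uStar hκ
      have hp1 : u t ((k:ℤ)+1) ≤ -uStar κ := g3 _ (by omega)
      have hpk1 : Phi' κ (u t ((k:ℤ)+1)) ≤ pStar κ :=
        Phi'_le_pStar_of_le_uStar hκ (by linarith)
      have hpm : Phi' κ (u t ((k:ℤ)-1)) = -pStar κ := by
        have : (k:ℤ) - 1 = (m:ℤ) := by omega
        rw [this, g1]
        exact Phi'_uStar hκ
      simp only [lap] at hlap
      rw [hpk, hpm] at hlap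
      linarith
    · -- k ≥ m+2 : local maximum chain
      have hval : ∀ j : ℤ, (m:ℤ) < j → u t j ≤ -uStar κ := fun j hj => g3 j hj
      have hlmax : ∀ j : ℤ, (m:ℤ) + 1 < j → u t j = -uStar κ →
          lap (fun i => Phi' κ (u t i)) j = 0 := by
        intro j hj hvj
        apply deriv_zero_of_localmax (h.sol.1 t ht00 j) halt hb1
        intro s h1 h2
        rcases lt_trichotomy s t with hst | hst | hst
        · rw [hvj]
          exact (memX_right_lt (hL s h1 hst) (show (m:ℤ) < j by omega)).le
        · rw [hst]
        · rw [hvj]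
          have := memX_right_lt (hR s hst h2.le) (show (m:ℤ)+1 < j from hj)
          linarith
      -- u t (k+1) = -uStar
      have hk1le : u t ((k:ℤ)+1) ≤ -uStar κ := hval _ (by omega)
      have hkm1le : u t ((k:ℤ)-1) ≤ -uStar κ := hval _ (by omega)
      have hlz : lap (fun i => Phi' κ (u t i)) (k:ℤ) = 0 := hlmax (k:ℤ) (by omega) hu
      have hpk : Phi' κ (u t (k:ℤ)) = pStar κ := by rw [hu]; exact Phi'_neg_uStar hκ
      have hb1' : Phi' κ (u t ((k:ℤ)+1)) ≤ pStar κ :=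
        Phi'_le_pStar_of_le_uStar hκ (by linarith)
      have hb2' : Phi' κ (u t ((k:ℤ)-1)) ≤ pStar κ :=
        Phi'_le_pStar_of_le_uStar hκ (by linarith)
      simp only [lap] at hlz
      rw [hpk] at hlz
      have hpp1 : Phi' κ (u t ((k:ℤ)+1)) = pStar κ := by linarith
      have hpm1 : Phi' κ (u t ((k:ℤ)-1)) = pStar κ := by linarith
      have hv1 : u t ((k:ℤ)+1) = -uStar κ := eq_neg_uStar_of_le hκ hk1le hpp1
      -- downward chain
      have chain : ∀ n : ℕ, (m:ℤ) + 1 ≤ (k:ℤ) - n →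
          u t ((k:ℤ) - n) = -uStar κ ∧ u t ((k:ℤ) - n + 1) = -uStar κ := by
        intro n
        induction n with
        | zero =>
          intro _
          constructor
          · simpa using hu
          · simpa using hv1
        | succ n ih =>
          intro hle
          have hcast : ((n+1:ℕ):ℤ) = (n:ℤ) + 1 := by push_cast; ring
          rw [hcast]
          have hle' : (m:ℤ) + 1 ≤ (k:ℤ) - n := by omega
          obtain ⟨ih1, ih2⟩ := ih hle'
          have hj2 : (m:ℤ) + 1 < (k:ℤ) - n := by omega
          have hlz2 := hlmax ((k:ℤ) - n) hj2 ih1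
          simp only [lap] at hlz2
          have hq1 : Phi' κ (u t ((k:ℤ) - n)) = pStar κ := by
            rw [ih1]; exact Phi'_neg_uStar hκ
          have hq2 : Phi' κ (u t ((k:ℤ) - n + 1)) = pStar κ := by
            rw [ih2]; exact Phi'_neg_uStar hκ
          have hq3 : Phi' κ (u t ((k:ℤ) - n - 1)) = pStar κ := by
            rw [hq2, hq1] at hlz2; linarith
          have hq4 : u t ((k:ℤ) - n - 1) ≤ -uStar κ := hval _ (by omega)
          have hval1 := eq_neg_uStar_of_le hκ hq4 hq3
          constructor
          · rw [show (k:ℤ) - ((n:ℤ)+1) = (k:ℤ) - n - 1 from by ring]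
            exact hval1
          · rw [show (k:ℤ) - ((n:ℤ)+1) + 1 = (k:ℤ) - n from by ring]
            exact ih1
      have hn0 : (m:ℤ) + 1 ≤ (k:ℤ) - ((k:ℤ) - (m:ℤ) - 1).toNat := by
        rw [Int.toNat_of_nonneg (by omega)]; omega
      obtain ⟨w1, w2⟩ := chain ((k:ℤ) - (m:ℤ) - 1).toNat hn0
      rw [Int.toNat_of_nonneg (by omega)] at w1 w2
      have wm1 : u t ((m:ℤ)+1) = -uStar κ := by
        rw [show (m:ℤ)+1 = (k:ℤ) - ((k:ℤ) - (m:ℤ) - 1) from by ring]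
        exact w1
      have wm2 : u t ((m:ℤ)+2) = -uStar κ := by
        rw [show (m:ℤ)+2 = (k:ℤ) - ((k:ℤ) - (m:ℤ) - 1) + 1 from by ring]
        exact w2
      -- one-sided minimum at site m+1: derivative ≥ 0
      have hone : 0 ≤ lap (fun i => Phi' κ (u t i)) ((m:ℤ)+1) := by
        apply deriv_nonneg_of_left_le (h.sol.1 t ht00 ((m:ℤ)+1)) halt
        intro s h1 h2
        rw [wm1]
        exact (memX_right_lt (hL s h1 h2) (show (m:ℤ) < (m:ℤ)+1 by omega)).le
      simp only [lap] at hone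
      have hr1 : Phi' κ (u t ((m:ℤ)+1)) = pStar κ := by
        rw [wm1]; exact Phi'_neg_uStar hκ
      have hr2 : Phi' κ (u t ((m:ℤ)+1+1)) = pStar κ := by
        rw [show (m:ℤ)+1+1 = (m:ℤ)+2 from by ring, wm2]
        exact Phi'_neg_uStar hκ
      have hr3 : Phi' κ (u t ((m:ℤ)+1-1)) = -pStar κ := by
        rw [show (m:ℤ)+1-1 = (m:ℤ) from by ring, g1]
        exact Phi'_uStar hκ
      rw [hr1, hr2, hr3] at hone
      linarith
  · -- t is interior to phase M
    have hmm : memX κ (M : ℤ) (u t) :=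
      phase_mem h hM1 hc.symm hclt hM
    have hkM : (k:ℤ) = (M:ℤ) := by
      rcases lt_trichotomy (k:ℤ) (M:ℤ) with hcc | hcc | hcc
      · exfalso
        have := memX_left hmm hcc
        rw [hu] at this
        linarith
      · exact hcc
      · exfalso
        have := memX_right_lt hmm hcc
        rw [hu] at this
        linarith
    rw [← hkM] at hmm
    have hp1 : u t ((k:ℤ)+1) < -uStar κ := memX_right_lt hmm (by omega)
    have hpk1 : Phi' κ (u t ((k:ℤ)+1)) < pStar κ := Phi'_lt_pStar_of_lt hκ hp1
    have hpk : Phi' κ (u t (k:ℤ)) = pStar κ := by rw [hu]; exact Phi'_neg_uStar hκ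
    simp only [lap] at hlap
    rw [hpk] at hlap
    have hgt : pStar κ < Phi' κ (u t ((k:ℤ)-1)) := by linarith
    exact (upper_of_Phi'_gt hκ hgt).2

end Part2

end SIS

/-- exit and entrance conditions plus a positive lower bound for the waiting
time between consecutive phase transitions. -/
theorem stmt1 (κ : ℝ) (hκ : 0 < κ) (u : ℝ → ℤ → ℝ) (tstar : ℕ → WithTop ℝ)
    (h : IsSIS κ u tstar) (h0 : memX κ 1 (u 0)) :
    (∃ C : ℝ, 0 < C ∧ ∀ k : ℕ, 1 ≤ k → ∀ tk : ℝ, tstar k = (tk : WithTop ℝ) →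
      u tk (k : ℤ) = uStar κ ∧
      0 < lap (fun i => Phi' κ (u tk i)) (k : ℤ) ∧
      ((tk + C : ℝ) : WithTop ℝ) ≤ tstar (k + 1)) ∧
    (∀ k : ℕ, 1 ≤ k → ∀ t : ℝ, 0 < t → u t (k : ℤ) = -uStar κ →
      0 ≤ lap (fun i => Phi' κ (u t i)) (k : ℤ) →
      uStarStar κ < u t ((k : ℤ) - 1)) := by
  obtain ⟨C, hC, hwait⟩ := SIS.waiting hκ h
  constructor
  · exact ⟨C, hC, fun k hk tk htk =>
      ⟨(SIS.trans_facts hκ h hk htk).1, SIS.lap_pos hκ h hk htk, hwait k hk tk htk⟩⟩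
  · exact SIS.part2 hκ h hC hwait
end
end

section
/- Suppose there exists b > 0 such that the single-interface initial data u(0) ∈ X_1 satisfy p_j(0) ≤ γ_j := p_* + b·max{1-j, 0} for all j ∈ ℤ. Then the unique single-interface solution satisfies p_j(t) ≤ γ_{j-k+1} for all j ∈ ℤ and all t ∈ [t_{k-1}^*, t_k^*), for every k ≥ 1. -/
open MeasureTheory Filter Set
open scoped Classical Topology NNReal

noncomputable section

namespace Stmt3Aux

variable {κ x : ℝ}

lemma uStar_pos (hκ : 0 < κ) : 0 < uStar κ := by
  unfold uStar; positivity

lemma pStar_nonneg (hκ : 0 < κ) : 0 ≤ pStar κ := by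
  unfold pStar; positivity

lemma uStar_add_pStar (hκ : 0 < κ) : uStar κ + pStar κ = 1 := by
  unfold uStar pStar; field_simp

lemma kappa_mul_uStar (hκ : 0 < κ) : κ * uStar κ = pStar κ := by
  unfold uStar pStar; field_simp

lemma uStarStar_eq (hκ : 0 < κ) : uStarStar κ = 1 + pStar κ := by
  unfold uStarStar pStar
  have h1 : (0:ℝ) < 1 + κ := by linarith
  field_simp
  ring

lemma phi'_of_le (hx : x ≤ -uStar κ) : Phi' κ x = x + 1 := by
  unfold Phi'; rw [if_pos hx]

lemma phi'_of_ge (hκ : 0 < κ) (hx : uStar κ ≤ x) : Phi' κ x = x - 1 := by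
  have h0 := uStar_pos hκ
  unfold Phi'; rw [if_neg (by linarith), if_pos hx]

lemma phi'_of_mid (h1 : -uStar κ < x) (h2 : x < uStar κ) : Phi' κ x = -κ * x := by
  unfold Phi'; rw [if_neg (by linarith), if_neg (by linarith)]

lemma abs_phi'_le (hκ : 0 < κ) (x : ℝ) : |Phi' κ x| ≤ |x| + 1 := by
  have h0 := uStar_pos hκ
  have h1 : 0 < 1 + κ := by linarith
  have hu : uStar κ * (1 + κ) = 1 := by unfold uStar; field_simp
  unfold Phi'; split_ifs with ha hb
  · rcases abs_cases x with ⟨h, _⟩ | ⟨h, _⟩ <;> rcases abs_cases (x + 1) with ⟨h', _⟩ | ⟨h', _⟩ <;> linarith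
  · rcases abs_cases x with ⟨h, _⟩ | ⟨h, _⟩ <;> rcases abs_cases (x - 1) with ⟨h', _⟩ | ⟨h', _⟩ <;> linarith
  · push_neg at ha hb
    have hax : |x| < uStar κ := abs_lt.mpr ⟨by linarith, hb⟩
    have : |(-κ * x)| = κ * |x| := by rw [abs_mul, abs_neg, abs_of_pos hκ]
    rw [this]
    nlinarith [abs_nonneg x, hax]

lemma phi'_eq_max (hκ : 0 < κ) (x : ℝ) :
    Phi' κ x = max (x - 1) (min (x + 1) (-(κ * x))) := by
  have h0 := uStar_pos hκ
  have h1 : 0 < 1 + κ := by linarith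
  have hu : uStar κ * (1 + κ) = 1 := by unfold uStar; field_simp
  unfold Phi'; split_ifs with ha hb
  · rw [min_eq_left (by nlinarith), max_eq_right (by linarith)]
  · rw [min_eq_right (by nlinarith), max_eq_left (by nlinarith)]
  · push_neg at ha hb
    rw [min_eq_right (by nlinarith), max_eq_right (by nlinarith)]; ring

lemma continuous_phi' (hκ : 0 < κ) : Continuous (Phi' κ) := by
  have : Phi' κ = fun x => max (x - 1) (min (x + 1) (-(κ * x))) := funext (phi'_eq_max hκ)
  rw [this]; fun_prop

lemma memX_lb (hκ : 0 < κ) {K : ℤ} {v : ℤ → ℝ} (hv : memX κ K v) (j : ℤ) :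
    -pStar κ ≤ Phi' κ (v j) := by
  have h0 := uStar_pos hκ
  have h2 := uStar_add_pStar hκ
  have h3 := kappa_mul_uStar hκ
  have h4 := uStarStar_eq hκ
  obtain ⟨⟨c, hc, hcl⟩, -, ⟨c2, hc2, hc2l⟩, ⟨C2, hC2, hC2u⟩, hk1, hk2⟩ := hv
  rcases lt_trichotomy j K with hj | rfl | hj
  · have hvj : uStar κ ≤ v j := (lt_of_lt_of_le hc (hcl j hj)).le
    rw [phi'_of_ge hκ hvj]; linarith
  · rcases le_or_gt (v j) (-uStar κ) with hle | hgt
    · rw [phi'_of_le hle]; linarith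
    · rw [phi'_of_mid hgt hk2]; nlinarith
  · have hvj : v j ≤ -uStar κ := (lt_of_le_of_lt (hC2u j hj) hC2).le
    have hvj2 := hc2l j hj
    rw [phi'_of_le hvj]; linarith

lemma memX_ub (hκ : 0 < κ) {K : ℤ} {v : ℤ → ℝ} (hv : memX κ K v) (j : ℤ) (hj : K ≤ j) :
    Phi' κ (v j) ≤ pStar κ := by
  have h0 := uStar_pos hκ
  have h2 := uStar_add_pStar hκ
  have h3 := kappa_mul_uStar hκ
  obtain ⟨-, -, -, ⟨C2, hC2, hC2u⟩, hk1, hk2⟩ := hv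
  rcases eq_or_lt_of_le hj with rfl | hj'
  · rcases le_or_gt (v K) (-uStar κ) with hle | hgt
    · rw [phi'_of_le hle]; linarith
    · rw [phi'_of_mid hgt hk2]; nlinarith
  · have hvj : v j ≤ -uStar κ := (lt_of_le_of_lt (hC2u j hj') hC2).le
    rw [phi'_of_le hvj]; linarith

lemma memX_eq (hκ : 0 < κ) {K : ℤ} {v : ℤ → ℝ} (hv : memX κ K v) (j : ℤ) (hj : j < K) :
    Phi' κ (v j) = v j - 1 := by
  obtain ⟨⟨c, hc, hcl⟩, -⟩ := hv
  exact phi'_of_ge hκ ((lt_of_lt_of_le hc (hcl j hj)).le)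

lemma deriv_nonneg_of_hit {g : ℝ → ℝ} {d a τ : ℝ} (hg : HasDerivAt g d τ) (ha : a < τ)
    (hneg : ∀ s, a ≤ s → s < τ → g s < 0) (h0 : g τ = 0) : 0 ≤ d := by
  have hs := hasDerivAt_iff_tendsto_slope.mp hg
  have hs' : Tendsto (slope g τ) (𝓝[<] τ) (𝓝 d) :=
    hs.mono_left (nhdsWithin_mono τ (fun x hx => ne_of_lt hx))
  refine ge_of_tendsto hs' ?_
  filter_upwards [Ioo_mem_nhdsLT_of_mem ⟨ha, le_rfl⟩] with s hs1
  have hgs : g s < 0 := hneg s hs1.1.le hs1.2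
  have : slope g τ s = g s / (s - τ) := by rw [slope_def_field, h0]; ring_nf
  rw [this]
  exact div_nonneg_iff.mpr (Or.inr ⟨hgs.le, by linarith [hs1.2]⟩)

lemma le_of_forall_eps {x y c : ℝ} (hc : 0 ≤ c) (h : ∀ ε : ℝ, 0 < ε → x ≤ y + ε * c) : x ≤ y := by
  by_contra hxy
  push_neg at hxy
  rcases eq_or_lt_of_le hc with rfl | hc'
  · have := h 1 one_pos; linarith
  · have h2 := h ((x - y) / (2 * c)) (div_pos (by linarith) (by linarith))
    have h3 : ((x - y) / (2 * c)) * c = (x - y) / 2 := by field_simp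
    rw [h3] at h2; linarith

lemma exists_real_between {x : WithTop ℝ} {t : ℝ} (h : (t : WithTop ℝ) < x) :
    ∃ s : ℝ, t < s ∧ (s : WithTop ℝ) < x := by
  rcases eq_or_ne x ⊤ with rfl | hx
  · exact ⟨t + 1, by linarith, WithTop.coe_lt_top _⟩
  · obtain ⟨r, rfl⟩ := WithTop.ne_top_iff_exists.mp hx
    have : t < r := WithTop.coe_lt_coe.mp h
    exact ⟨(t + r) / 2, by linarith, WithTop.coe_lt_coe.mpr (by linarith)⟩

lemma le_of_left_lim {g : ℝ → ℝ} {a τ c : ℝ} (hg : ContinuousAt g τ) (ha : a < τ)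
    (hb : ∀ s, a ≤ s → s < τ → g s ≤ c) : g τ ≤ c := by
  refine le_of_tendsto (hg.tendsto.mono_left (nhdsWithin_le_nhds : 𝓝[Iio τ] τ ≤ 𝓝 τ)) ?_
  filter_upwards [Ioo_mem_nhdsLT_of_mem ⟨ha, le_rfl⟩] with s hs
  exact hb s hs.1.le hs.2

end Stmt3Aux

set_option maxHeartbeats 1000000 in
/-- Waiting Lemma, majorant part: if p(0) lies below the kink γ then
p_j(t) ≤ γ_{j-k+1} on [t_{k-1}^*, t_k^*) for every k ≥ 1. -/
theorem stmt3 (κ : ℝ) (hκ : 0 < κ) (u : ℝ → ℤ → ℝ) (tstar : ℕ → WithTop ℝ)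
    (h : IsSIS κ u tstar) (h0 : memX κ 1 (u 0)) (b : ℝ) (hb : 0 < b)
    (hp0 : ∀ j : ℤ, Phi' κ (u 0 j) ≤ pStar κ + b * max (1 - (j : ℝ)) 0) :
    ∀ k : ℕ, 1 ≤ k → ∀ t : ℝ,
      tstar (k - 1) ≤ (t : WithTop ℝ) → (t : WithTop ℝ) < tstar k →
      ∀ j : ℤ, Phi' κ (u t j) ≤ pStar κ + b * max (1 - ((j : ℝ) - (k : ℝ) + 1)) 0 := by
  have hcontP : ∀ j : ℤ, Continuous (fun s : ℝ => Phi' κ (u (max s 0) j)) := by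
    intro j
    refine (Stmt3Aux.continuous_phi' hκ).comp ?_
    rw [continuous_iff_continuousAt]
    intro s
    exact ContinuousAt.comp (x := s)
      ((h.sol.1 (max s 0) (le_max_right s 0) j).continuousAt)
      ((continuous_id.max continuous_const).continuousAt)
  suffices H : ∀ k : ℕ, 1 ≤ k → ∀ t : ℝ,
      tstar (k - 1) ≤ (t : WithTop ℝ) → (t : WithTop ℝ) < tstar k →
      ∀ j : ℤ, Phi' κ (u t j) ≤ pStar κ + b * max ((k : ℝ) - (j : ℝ)) 0 by
    intro k hk t h1 h2 j
    have H2 := H k hk t h1 h2 j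
    have e : (1 : ℝ) - ((j : ℝ) - (k : ℝ) + 1) = (k : ℝ) - (j : ℝ) := by ring
    rw [e]
    exact H2
  intro k
  induction k using Nat.strong_induction_on with
  | _ k IH =>
  intro hk t ht1 ht2
  have h00 : tstar 0 = ((0:ℝ) : WithTop ℝ) := by rw [h.t0]; rfl
  have ht0 : (0:ℝ) ≤ t := by
    have h2 := h.mono (Nat.zero_le (k-1))
    rw [h00] at h2
    exact_mod_cast h2.trans ht1
  have hTrne : tstar (k-1) ≠ ⊤ := by
    intro hT
    rw [hT, top_le_iff] at ht1
    exact (WithTop.coe_ne_top ht1)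
  obtain ⟨Tr, hTr⟩ : ∃ r : ℝ, tstar (k-1) = (r : WithTop ℝ) := by
    obtain ⟨r, hr⟩ := WithTop.ne_top_iff_exists.mp hTrne
    exact ⟨r, hr.symm⟩
  have hTrt : Tr ≤ t := by
    rw [hTr] at ht1; exact_mod_cast ht1
  have hTr0 : 0 ≤ Tr := by
    have h2 := h.mono (Nat.zero_le (k-1))
    rw [h00, hTr] at h2
    exact_mod_cast h2
  -- Step E : bound at the left endpoint Tr
  have hE : ∀ j : ℤ, Phi' κ (u Tr j) ≤ pStar κ + b * max ((k:ℝ) - (j:ℝ)) 0 := by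
    rcases eq_or_lt_of_le hk with hk1 | hk2
    · -- k = 1, Tr = 0
      have hk1' : k = 1 := hk1.symm
      subst hk1'
      rw [show (1:ℕ) - 1 = 0 from rfl, h00] at hTr
      have hTr00 : Tr = 0 := by exact_mod_cast hTr.symm
      subst hTr00
      intro j
      have := hp0 j
      push_cast
      convert this using 4
    · -- 2 ≤ k
      have hkey : ∃ m, tstar m = (Tr : WithTop ℝ) := ⟨k-1, hTr⟩
      have hm1 : tstar (Nat.find hkey) = (Tr : WithTop ℝ) := Nat.find_spec hkey
      set m := Nat.find hkey with hm
      have hmk : m ≤ k - 1 := Nat.find_min' hkey hTr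
      have hmlt : m < k := lt_of_le_of_lt hmk (Nat.sub_lt (by omega) one_pos)
      have hTrpos : (0 : WithTop ℝ) < (Tr : WithTop ℝ) := by
        rw [← hTr]; exact h.pos (k-1) (by omega)
      have hm0 : m ≠ 0 := by
        intro h0
        rw [h0, h.t0] at hm1
        rw [← hm1] at hTrpos
        exact lt_irrefl _ hTrpos
      have hm1' : 1 ≤ m := Nat.one_le_iff_ne_zero.mpr hm0
      have hprev : tstar (m-1) < (Tr : WithTop ℝ) := by
        rcases lt_or_eq_of_le ((h.mono (Nat.sub_le m 1)).trans_eq hm1) with h' | h'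
        · exact h'
        · exact absurd h' (Nat.find_min hkey (Nat.sub_lt hm1' one_pos))
      have hprevne : tstar (m-1) ≠ ⊤ := ne_top_of_lt hprev
      obtain ⟨Sr, hSr⟩ : ∃ r : ℝ, tstar (m-1) = (r : WithTop ℝ) := by
        obtain ⟨r, hr⟩ := WithTop.ne_top_iff_exists.mp hprevne
        exact ⟨r, hr.symm⟩
      have hSrTr : Sr < Tr := by rw [hSr] at hprev; exact_mod_cast hprev
      have hSr0 : 0 ≤ Sr := by
        have h2 := h.mono (Nat.zero_le (m-1))
        rw [h00, hSr] at h2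
        exact_mod_cast h2
      intro j
      have hb1 : ∀ s, Sr ≤ s → s < Tr →
          Phi' κ (u (max s 0) j) ≤ pStar κ + b * max ((m:ℝ) - (j:ℝ)) 0 := by
        intro s hs1 hs2
        have hs0 : (0:ℝ) ≤ s := hSr0.trans hs1
        rw [max_eq_left hs0]
        refine IH m hmlt hm1' s ?_ ?_ j
        · rw [hSr]; exact_mod_cast hs1
        · rw [hm1]; exact_mod_cast hs2
      have hlim := Stmt3Aux.le_of_left_lim ((hcontP j).continuousAt) hSrTr hb1
      rw [max_eq_left hTr0] at hlim
      refine hlim.trans ?_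
      have hmkR : ((m:ℝ)) ≤ (k:ℝ) := by exact_mod_cast hmlt.le
      have hmm : max ((m:ℝ) - (j:ℝ)) 0 ≤ max ((k:ℝ) - (j:ℝ)) 0 :=
        max_le_max (by linarith) le_rfl
      nlinarith [mul_le_mul_of_nonneg_left hmm hb.le]
  rcases eq_or_lt_of_le hTrt with rfl | hlt
  · exact hE
  -- interior case: hlt : Tr < t
  obtain ⟨t2, ht2a, ht2b⟩ := Stmt3Aux.exists_real_between ht2
  obtain ⟨t3, ht3a, ht3b⟩ := Stmt3Aux.exists_real_between ht2b
  have ht20 : (0:ℝ) ≤ t2 := ht0.trans ht2a.le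
  have hphase : ∀ s : ℝ, Tr < s → s < t3 → memX κ (k:ℤ) (u s) := by
    intro s h1 h2
    refine h.phase k hk (by rw [hTr]; exact WithTop.coe_ne_top) s ?_ ?_
    · rw [hTr]; exact_mod_cast h1
    · exact lt_trans (by exact_mod_cast h2 : (s : WithTop ℝ) < (t3 : WithTop ℝ)) ht3b
  have hs0' : ∀ s : ℝ, Tr < s → (0:ℝ) ≤ s := fun s hs => hTr0.trans hs.le
  have hODE : ∀ j : ℤ, j < (k:ℤ) → ∀ s, Tr < s → s < t3 →
      HasDerivAt (fun r => Phi' κ (u r j)) (lap (fun i => Phi' κ (u s i)) j) s := by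
    intro j hj s hs1 hs2
    have hu := h.sol.1 s (hs0' s hs1) j
    have heq : (fun r => Phi' κ (u r j)) =ᶠ[𝓝 s] (fun r => u r j - 1) := by
      filter_upwards [Ioo_mem_nhds hs1 hs2] with r hr
      exact Stmt3Aux.memX_eq hκ (hphase r hr.1 hr.2) j hj
    exact (hu.sub_const 1).congr_of_eventuallyEq heq
  -- uniform bound M on (Tr, t2]
  obtain ⟨C, hC⟩ := h.sol.2 t2 ht20
  have hC0 : (0:ℝ) ≤ C := (abs_nonneg _).trans (hC 0)
  have hps := Stmt3Aux.pStar_nonneg hκ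
  set M : ℝ := Real.exp (2*t2 - 2*Tr) * (C + 1 + pStar κ) with hM
  have hM0 : 0 < M := mul_pos (Real.exp_pos _) (by linarith)
  have hpM : ∀ j : ℤ, j < (k:ℤ) → ∀ s, Tr < s → s ≤ t2 →
      Phi' κ (u s j) + pStar κ ≤ M := by
    intro j hj s hs1 hs2
    set f : ℝ → ℝ := fun r => Real.exp (2*r) * (Phi' κ (u r j) + pStar κ) with hf
    have hfd : ∀ r, Tr < r → r < t3 → HasDerivAt f
        (Real.exp (2*r) * ((Phi' κ (u r (j+1)) + pStar κ) + (Phi' κ (u r (j-1)) + pStar κ))) r := by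
      intro r h1 h2
      have hexp : HasDerivAt (fun x : ℝ => Real.exp (2*x)) (2 * Real.exp (2*r)) r := by
        simpa [mul_comm] using (HasDerivAt.exp ((hasDerivAt_id r).const_mul 2))
      have hp := (hODE j hj r h1 h2).add_const (pStar κ)
      have hmul := hexp.mul hp
      refine hmul.congr_deriv ?_
      rw [lap]; ring
    have hsub : Icc s t2 ⊆ Ioo Tr t3 := fun r hr =>
      ⟨lt_of_lt_of_le hs1 hr.1, lt_of_le_of_lt hr.2 ht3a⟩
    have hmono : MonotoneOn f (Icc s t2) := by
      apply monotoneOn_of_deriv_nonneg (convex_Icc s t2)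
      · intro r hr
        exact ((hfd r (hsub hr).1 (hsub hr).2).continuousAt).continuousWithinAt
      · intro r hr
        have hr' : r ∈ Icc s t2 := interior_subset hr
        exact ((hfd r (hsub hr').1 (hsub hr').2).differentiableAt).differentiableWithinAt
      · intro r hr
        have hr' : r ∈ Icc s t2 := interior_subset hr
        rw [(hfd r (hsub hr').1 (hsub hr').2).deriv]
        have l1 := Stmt3Aux.memX_lb hκ (hphase r (hsub hr').1 (hsub hr').2) (j+1)
        have l2 := Stmt3Aux.memX_lb hκ (hphase r (hsub hr').1 (hsub hr').2) (j-1)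
        have := (Real.exp_pos (2*r)).le
        nlinarith
    have hfst2 : f s ≤ f t2 := hmono ⟨le_rfl, hs2⟩ ⟨hs2, le_rfl⟩ hs2
    have hpt2 : Phi' κ (u t2 j) + pStar κ ≤ C + 1 + pStar κ := by
      have h1 := Stmt3Aux.abs_phi'_le hκ (u t2 j)
      have h2 := hC j
      have h3 := le_abs_self (Phi' κ (u t2 j))
      linarith
    have h1 : Real.exp (2*s) * (Phi' κ (u s j) + pStar κ) ≤ Real.exp (2*t2) * (C + 1 + pStar κ) := by
      refine hfst2.trans ?_
      exact mul_le_mul_of_nonneg_left hpt2 (Real.exp_pos _).le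
    have h2 : Phi' κ (u s j) + pStar κ ≤ Real.exp (2*t2) * (C + 1 + pStar κ) / Real.exp (2*s) := by
      rw [le_div_iff₀ (Real.exp_pos _)]
      nlinarith [h1]
    refine h2.trans ?_
    have hM' : M = Real.exp (2*t2) * (C + 1 + pStar κ) / Real.exp (2*Tr) := by
      rw [hM, show 2*t2 - 2*Tr = 2*t2 - 2*Tr from rfl, Real.exp_sub]; ring
    rw [hM']
    apply div_le_div_of_nonneg_left
    · positivity
    · exact Real.exp_pos _
    · exact Real.exp_le_exp.mpr (by linarith)
  -- far-field bound
  obtain ⟨n, hn⟩ := exists_nat_ge ((M+1)/b)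
  have hn1 : 1 ≤ n := by
    by_contra h'
    push_neg at h'
    have hn0 : n = 0 := by omega
    rw [hn0] at hn
    have := div_pos (show (0:ℝ) < M + 1 by linarith) hb
    simp at hn
    linarith
  have hbn : M + 1 ≤ b * n := by
    rw [div_le_iff₀ hb] at hn
    linarith
  set j0 : ℤ := (k:ℤ) - n with hj0def
  have hj0k : j0 < (k:ℤ) := by
    have : (1:ℤ) ≤ (n:ℤ) := by exact_mod_cast hn1
    omega
  have hfar : ∀ j : ℤ, j ≤ j0 → ∀ s, Tr < s → s ≤ t2 →
      Phi' κ (u s j) - (pStar κ + b * max ((k:ℝ) - (j:ℝ)) 0) ≤ -1 := by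
    intro j hj s hs1 hs2
    have hjk : j < (k:ℤ) := lt_of_le_of_lt hj hj0k
    have h1 := hpM j hjk s hs1 hs2
    have hkj : (n:ℝ) ≤ (k:ℝ) - (j:ℝ) := by
      have h' : j ≤ (k:ℤ) - (n:ℤ) := hj
      have h'' : (j:ℝ) ≤ (((k:ℤ) - (n:ℤ) : ℤ) : ℝ) := Int.cast_le.mpr h'
      push_cast at h''
      linarith
    have hn0R : (0:ℝ) ≤ (n:ℝ) := Nat.cast_nonneg n
    have hmax : max ((k:ℝ) - (j:ℝ)) 0 = (k:ℝ) - (j:ℝ) := max_eq_left (by linarith)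
    rw [hmax]
    have hbn' : M + 1 ≤ b * ((k:ℝ) - (j:ℝ)) :=
      hbn.trans (mul_le_mul_of_nonneg_left hkj hb.le)
    linarith
    -- main epsilon comparison claim
  have hmain : ∀ j : ℤ, j < (k:ℤ) → ∀ ε : ℝ, 0 < ε →
      Phi' κ (u t j) ≤ (pStar κ + b * max ((k:ℝ) - (j:ℝ)) 0) +
        ε * ((2:ℝ)^((k:ℤ) - j) * Real.exp (t2 - Tr)) := by
    intro j hj ε hε
    set S : Finset ℤ := Finset.Ico (j0+1) (k:ℤ) with hS
    have hev : ∀ᶠ s in 𝓝[>] Tr,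
        (∀ i ∈ S, Phi' κ (u (max s 0) i) < (pStar κ + b * max ((k:ℝ) - (i:ℝ)) 0) + ε)
        ∧ s ∈ Ioo Tr t := by
      refine Filter.Eventually.and ?_ (Ioo_mem_nhdsGT_of_mem ⟨le_rfl, hlt⟩)
      rw [eventually_all_finset]
      intro i hi
      have hiTr : Phi' κ (u (max Tr 0) i) < (pStar κ + b * max ((k:ℝ) - (i:ℝ)) 0) + ε := by
        rw [max_eq_left hTr0]
        linarith [hE i]
      exact (((hcontP i).continuousAt (x := Tr)).eventually_lt_const hiTr).filter_mono
        nhdsWithin_le_nhds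
    obtain ⟨a', ha'S, ha'I⟩ := hev.exists
    have ha'Tr : Tr < a' := ha'I.1
    have ha't : a' < t := ha'I.2
    have ha'0 : (0:ℝ) < a' := lt_of_le_of_lt hTr0 ha'Tr
    -- the no-crossing claim on [a', t2]
    have hnb : ∀ s ∈ Icc a' t2, ∀ i ∈ S,
        Phi' κ (u s i) - (pStar κ + b * max ((k:ℝ) - (i:ℝ)) 0)
          < ε * (2:ℝ)^((k:ℤ) - i) * Real.exp (s - a') := by
      by_contra hcon
      push_neg at hcon
      obtain ⟨s₀, hs₀, i₀, hi₀, hge₀⟩ := hcon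
      set T : Set ℝ := ⋃ i ∈ (S : Set ℤ), {s | s ∈ Icc a' t2 ∧
        ε * (2:ℝ)^((k:ℤ) - i) * Real.exp (s - a')
          ≤ Phi' κ (u (max s 0) i) - (pStar κ + b * max ((k:ℝ) - (i:ℝ)) 0)} with hT
      have hTcl : IsClosed T := by
        refine Set.Finite.isClosed_biUnion (S.finite_toSet) (fun i _ => ?_)
        have hc1 : Continuous fun s : ℝ =>
            Phi' κ (u (max s 0) i) - (pStar κ + b * max ((k:ℝ) - (i:ℝ)) 0) :=
          (hcontP i).sub continuous_const
        have hc2 : Continuous fun s : ℝ => ε * (2:ℝ)^((k:ℤ) - i) * Real.exp (s - a') := by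
          fun_prop
        exact isClosed_Icc.inter (isClosed_le hc2 hc1)
      have hTsub : T ⊆ Icc a' t2 := by
        intro x hx
        simp only [hT, Set.mem_iUnion, Set.mem_setOf_eq] at hx
        obtain ⟨i, hi, hx1, -⟩ := hx
        exact hx1
      have hTne : T.Nonempty := by
        refine ⟨s₀, Set.mem_biUnion hi₀ ?_⟩
        refine ⟨hs₀, ?_⟩
        rwa [max_eq_left (le_trans ha'0.le hs₀.1)]
      have hTbdd : BddBelow T := bddBelow_Icc.mono hTsub
      set τ := sInf T with hτ
      have hτT : τ ∈ T := hTcl.csInf_mem hTne hTbdd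
      obtain ⟨i₁, hi₁S, hτIcc, hτge⟩ : ∃ i ∈ S, τ ∈ Icc a' t2 ∧
          ε * (2:ℝ)^((k:ℤ) - i) * Real.exp (τ - a')
            ≤ Phi' κ (u (max τ 0) i) - (pStar κ + b * max ((k:ℝ) - (i:ℝ)) 0) := by
        simp only [hT, Set.mem_iUnion, Set.mem_setOf_eq] at hτT
        obtain ⟨i, hi, h1, h2⟩ := hτT
        exact ⟨i, hi, h1, h2⟩
      have hi₁k : i₁ < (k:ℤ) := (Finset.mem_Ico.mp hi₁S).2
      have hi₁j0 : j0 + 1 ≤ i₁ := (Finset.mem_Ico.mp hi₁S).1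
      have hτ0 : (0:ℝ) ≤ τ := le_trans ha'0.le hτIcc.1
      have hτa' : a' < τ := by
        rcases eq_or_lt_of_le hτIcc.1 with he | hlt'
        · exfalso
          have hw := ha'S i₁ hi₁S
          rw [max_eq_left ha'0.le] at hw
          rw [← he] at hτge
          rw [max_eq_left ha'0.le] at hτge
          have h2p : (2:ℝ) ≤ (2:ℝ)^((k:ℤ) - i₁) := by
            calc (2:ℝ) = (2:ℝ)^(1:ℤ) := by norm_num
            _ ≤ (2:ℝ)^((k:ℤ) - i₁) := by
              apply zpow_le_zpow_right₀ (by norm_num)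
              omega
          simp only [sub_self, Real.exp_zero, mul_one] at hτge
          nlinarith
        · exact hlt'
      have hτTr : Tr < τ := lt_trans ha'Tr hτa'
      have hτt3 : τ < t3 := lt_of_le_of_lt hτIcc.2 ht3a
      have hlow : ∀ s, a' ≤ s → s < τ → ∀ i ∈ S,
          Phi' κ (u (max s 0) i) - (pStar κ + b * max ((k:ℝ) - (i:ℝ)) 0)
            < ε * (2:ℝ)^((k:ℤ) - i) * Real.exp (s - a') := by
        intro s h1 h2 i hi
        by_contra h3
        push_neg at h3
        have hsT : s ∈ T := Set.mem_biUnion hi ⟨⟨h1, le_trans h2.le hτIcc.2⟩, h3⟩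
        have := csInf_le hTbdd hsT
        rw [← hτ] at this
        linarith
      have hWub : ∀ i : ℤ, i ≤ (k:ℤ) →
          Phi' κ (u τ i) - (pStar κ + b * max ((k:ℝ) - (i:ℝ)) 0)
            ≤ ε * (2:ℝ)^((k:ℤ) - i) * Real.exp (τ - a') := by
        intro i hik
        have hVpos : 0 < ε * (2:ℝ)^((k:ℤ) - i) * Real.exp (τ - a') := by positivity
        rcases le_or_gt i j0 with hile | hi1
        · have := hfar i hile τ hτTr hτIcc.2
          linarith
        · rcases eq_or_lt_of_le hik with hik' | hik'
          · have hub := Stmt3Aux.memX_ub hκ (hphase τ hτTr hτt3) i (le_of_eq hik'.symm)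
            have hmax0 : max ((k:ℝ) - (i:ℝ)) 0 = 0 := by
              rw [hik']
              simp
            rw [hmax0]
            linarith
          · have hiS : i ∈ S := Finset.mem_Ico.mpr ⟨by omega, hik'⟩
            have hcontg : ContinuousAt (fun s : ℝ =>
                Phi' κ (u (max s 0) i) - (pStar κ + b * max ((k:ℝ) - (i:ℝ)) 0)
                  - ε * (2:ℝ)^((k:ℤ) - i) * Real.exp (s - a')) τ := by
              apply Continuous.continuousAt
              refine ((hcontP i).sub continuous_const).sub ?_
              fun_prop
            have hll := Stmt3Aux.le_of_left_lim (c := 0) hcontg hτa' ?_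
            · rw [max_eq_left hτ0] at hll
              linarith
            · intro s h1 h2
              have := hlow s h1 h2 i hiS
              linarith
      have hτeq : Phi' κ (u τ i₁) - (pStar κ + b * max ((k:ℝ) - (i₁:ℝ)) 0)
          = ε * (2:ℝ)^((k:ℤ) - i₁) * Real.exp (τ - a') := by
        have h1 := hWub i₁ hi₁k.le
        rw [max_eq_left hτ0] at hτge
        linarith
      -- derivative at τ
      have hder1 : HasDerivAt (fun s => Phi' κ (u s i₁))
          (lap (fun i => Phi' κ (u τ i)) i₁) τ := hODE i₁ hi₁k τ hτTr hτt3
      have hderE : HasDerivAt (fun s : ℝ => Real.exp (s - a')) (Real.exp (τ - a')) τ := by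
        simpa using ((hasDerivAt_id τ).sub_const a').exp
      have hderV : HasDerivAt (fun s : ℝ => ε * (2:ℝ)^((k:ℤ) - i₁) * Real.exp (s - a'))
          (ε * (2:ℝ)^((k:ℤ) - i₁) * Real.exp (τ - a')) τ := by
        have := hderE.const_mul (ε * (2:ℝ)^((k:ℤ) - i₁))
        simpa [mul_assoc] using this
      have hderg : HasDerivAt (fun s : ℝ => Phi' κ (u s i₁)
          - (pStar κ + b * max ((k:ℝ) - (i₁:ℝ)) 0)
          - ε * (2:ℝ)^((k:ℤ) - i₁) * Real.exp (s - a'))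
          (lap (fun i => Phi' κ (u τ i)) i₁
            - ε * (2:ℝ)^((k:ℤ) - i₁) * Real.exp (τ - a')) τ :=
        (hder1.sub_const _).sub hderV
      have hd0 : 0 ≤ lap (fun i => Phi' κ (u τ i)) i₁
          - ε * (2:ℝ)^((k:ℤ) - i₁) * Real.exp (τ - a') := by
        refine Stmt3Aux.deriv_nonneg_of_hit hderg hτa' ?_ ?_
        · intro s h1 h2
          have := hlow s h1 h2 i₁ hi₁S
          rw [max_eq_left (le_trans ha'0.le h1)] at this
          linarith
        · rw [sub_eq_zero]
          exact hτeq
      -- contradiction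
      have hnb1 := hWub (i₁+1) (by omega)
      have hnb2 := hWub (i₁-1) (by omega)
      have hVp : (2:ℝ)^((k:ℤ) - (i₁+1)) = (2:ℝ)^((k:ℤ) - i₁) / 2 := by
        rw [show (k:ℤ) - (i₁+1) = ((k:ℤ) - i₁) - 1 by ring, zpow_sub_one₀ (two_ne_zero)]
        ring
      have hVm : (2:ℝ)^((k:ℤ) - (i₁-1)) = (2:ℝ)^((k:ℤ) - i₁) * 2 := by
        rw [show (k:ℤ) - (i₁-1) = ((k:ℤ) - i₁) + 1 by ring, zpow_add_one₀ (two_ne_zero)]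
      have hmax1 : max ((k:ℝ) - ((i₁:ℤ):ℝ)) 0 = (k:ℝ) - (i₁:ℝ) := by
        apply max_eq_left
        have : ((i₁:ℤ):ℝ) ≤ ((k:ℤ):ℝ) := Int.cast_le.mpr hi₁k.le
        push_cast at this ⊢
        linarith
      have hmaxp : max ((k:ℝ) - ((i₁+1 : ℤ):ℝ)) 0 = (k:ℝ) - ((i₁+1 : ℤ):ℝ) := by
        apply max_eq_left
        have h' : ((i₁+1:ℤ):ℝ) ≤ ((k:ℤ):ℝ) := Int.cast_le.mpr (by omega)
        push_cast at h' ⊢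
        linarith
      have hmaxm : max ((k:ℝ) - ((i₁-1 : ℤ):ℝ)) 0 = (k:ℝ) - ((i₁-1 : ℤ):ℝ) := by
        apply max_eq_left
        have h' : ((i₁-1:ℤ):ℝ) ≤ ((k:ℤ):ℝ) := Int.cast_le.mpr (by omega)
        push_cast at h' ⊢
        linarith
      rw [lap] at hd0
      rw [hVp, hmaxp] at hnb1
      rw [hVm, hmaxm] at hnb2
      rw [hmax1] at hτeq
      push_cast at hnb1 hnb2 hτeq
      have hVpos : 0 < ε * (2:ℝ)^((k:ℤ) - i₁) * Real.exp (τ - a') := by positivity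
      have hhalf : ε * ((2:ℝ)^((k:ℤ) - i₁) / 2) * Real.exp (τ - a')
          = (ε * (2:ℝ)^((k:ℤ) - i₁) * Real.exp (τ - a')) / 2 := by ring
      have hdouble : ε * ((2:ℝ)^((k:ℤ) - i₁) * 2) * Real.exp (τ - a')
          = 2 * (ε * (2:ℝ)^((k:ℤ) - i₁) * Real.exp (τ - a')) := by ring
      rw [hhalf] at hnb1
      rw [hdouble] at hnb2
      linarith [hd0, hnb1, hnb2, hτeq, hVpos]
    -- use hnb at time t
    rcases le_or_gt j j0 with hj0' | hjS
    · have := hfar j hj0' t hlt ht2a.le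
      have hVpos : (0:ℝ) ≤ ε * ((2:ℝ)^((k:ℤ) - j) * Real.exp (t2 - Tr)) := by positivity
      linarith
    · have hjS' : j ∈ S := Finset.mem_Ico.mpr ⟨by omega, hj⟩
      have hnbt := hnb t ⟨ha't.le, ht2a.le⟩ j hjS'
      have hexp : Real.exp (t - a') ≤ Real.exp (t2 - Tr) := Real.exp_le_exp.mpr (by linarith)
      have h0' : (0:ℝ) ≤ ε * (2:ℝ)^((k:ℤ) - j) := by positivity
      have hmono2 := mul_le_mul_of_nonneg_left hexp h0'
      have hrw : ε * (2:ℝ)^((k:ℤ) - j) * Real.exp (t2 - Tr)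
          = ε * ((2:ℝ)^((k:ℤ) - j) * Real.exp (t2 - Tr)) := by ring
      have hassoc : ε * (2:ℝ)^((k:ℤ) - j) * Real.exp (t - a')
          = ε * ((2:ℝ)^((k:ℤ) - j) * Real.exp (t - a')) := by ring
      linarith [hnbt, hmono2, hrw.le, hrw.ge, hassoc.le, hassoc.ge]
  -- conclude
  intro j
  rcases lt_or_ge j (k:ℤ) with hj | hj
  · have hc : (0:ℝ) ≤ (2:ℝ)^((k:ℤ) - j) * Real.exp (t2 - Tr) := by positivity
    exact Stmt3Aux.le_of_forall_eps hc (fun ε hε => hmain j hj ε hε)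
  · have hub := Stmt3Aux.memX_ub hκ (hphase t hlt (lt_trans ht2a ht3a)) j hj
    have hmax : max ((k:ℝ) - (j:ℝ)) 0 = 0 := by
      apply max_eq_right
      have : ((k:ℤ):ℝ) ≤ ((j:ℤ):ℝ) := Int.cast_le.mpr hj
      push_cast at this ⊢
      linarith
    rw [hmax]
    linarith
end
end
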